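/- arXiv:1503.02119 — 8 statements merged into one kernel-verified Lean document; each statement's English description precedes it below -/
import Mathlib

section
/- Uniqueness criterion (Theorem 2, via criterion (C3)): Let q be a totally stable, conservative Q-matrix on a countable set E. Then for every λ > 0 the only λ-solution is u = 0 (equivalently, the Q-process is unique) if and only if the following two conditions hold simultaneously: (U1) there exist subsets E_n ⊆ E with E_n ⊆ E_{n+1}, ⋃_n E_n = E, and sup_{i ∈ E_n} q_i < ∞ for every n, together with a nonnegative function φ : E → [0,∞) such that lim_{n→∞} inf_{i ∉ E_n} φ(i) = ∞ (with the convention inf_∅ = ∞, i.e., for every M there is N such that for all n ≥ N and all i ∉ E_n one has φ(i) ≥ M); and (U2) there exists a constant c ∈ ℝ such that Qφ ≤ cφ. -/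
open scoped BigOperators Classical

/-- `q` is a totally stable, conservative Q-matrix on `E`:
off-diagonal entries are nonnegative, the jump rates `q_i = -q i i` are
nonnegative (and finite), and the off-diagonal row sums equal `q_i`. -/
def IsQMatrix {E : Type*} (q : E → E → ℝ) : Prop :=
  (∀ i j, i ≠ j → 0 ≤ q i j) ∧ (∀ i, q i i ≤ 0) ∧
    ∀ i, HasSum (fun j => if j = i then 0 else q i j) (-q i i)

/-- `u` is a `λ`-solution of `(λ I - Q) u = 0`, `0 ≤ u ≤ 1`:
`∑_{j ≠ i} q(i,j) u(j) = (λ + q_i) u(i)` for every `i`. -/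
def IsLamSolution {E : Type*} (q : E → E → ℝ) (lam : ℝ) (u : E → ℝ) : Prop :=
  (∀ i, 0 ≤ u i ∧ u i ≤ 1) ∧
    ∀ i, HasSum (fun j => if j = i then 0 else q i j * u j) ((lam + -q i i) * u i)

/-- The drift condition `Qφ ≤ cφ`: for every `i`, the series
`∑_{j ≠ i} q(i,j) φ(j)` is finite and
`∑_{j ≠ i} q(i,j) φ(j) - q_i φ(i) ≤ c φ(i)`. -/
def DriftLE {E : Type*} (q : E → E → ℝ) (φ : E → ℝ) (c : ℝ) : Prop :=
  ∀ i, Summable (fun j => if j = i then 0 else q i j * φ j) ∧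
    (∑' j, if j = i then 0 else q i j * φ j) - (-q i i) * φ i ≤ c * φ i

namespace QProcAux

open ENNReal Filter Set Topology

variable {E : Type*}

/-- Off-diagonal rates as `ℝ≥0∞`. -/
noncomputable def Qe (q : E → E → ℝ) : E → E → ℝ≥0∞ :=
  fun i j => ENNReal.ofReal (if j = i then 0 else q i j)

/-- Total jump rate `q_i = -q i i` as `ℝ≥0∞`. -/
noncomputable def dq (q : E → E → ℝ) : E → ℝ≥0∞ := fun i => ENNReal.ofReal (-q i i)

/-- The resolvent-type kernel `(P_a f)(i) = (∑_j q(i,j) f(j)) / (a + q_i)`. -/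
noncomputable def opP (q : E → E → ℝ) (a : ℝ≥0∞) (f : E → ℝ≥0∞) : E → ℝ≥0∞ :=
  fun i => (∑' j, Qe q i j * f j) / (a + dq q i)

lemma Qe_ne_top {q : E → E → ℝ} {i j : E} : Qe q i j ≠ ∞ := ENNReal.ofReal_ne_top

lemma dq_ne_top {q : E → E → ℝ} {i : E} : dq q i ≠ ∞ := ENNReal.ofReal_ne_top

section basic

variable {q : E → E → ℝ}

lemma Qsum (hq : IsQMatrix q) (i : E) : ∑' j, Qe q i j = dq q i := by
  have hnn : ∀ j, 0 ≤ (if j = i then 0 else q i j) := by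
    intro j
    by_cases h : j = i
    · simp [h]
    · simpa [h] using hq.1 i j (Ne.symm h)
  have hs : HasSum (fun j => if j = i then 0 else q i j) (-q i i) := hq.2.2 i
  have := (ENNReal.ofReal_tsum_of_nonneg hnn hs.summable).symm
  rw [hs.tsum_eq] at this
  simpa [Qe, dq] using this

lemma tsumQ_le_of_le_one (hq : IsQMatrix q) {f : E → ℝ≥0∞} (hf : ∀ j, f j ≤ 1) (i : E) :
    ∑' j, Qe q i j * f j ≤ dq q i := by
  calc ∑' j, Qe q i j * f j ≤ ∑' j, Qe q i j * 1 :=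
        ENNReal.tsum_le_tsum fun j => mul_le_mul_right (hf j) _
  _ = dq q i := by simpa using Qsum hq i

end basic

section op

variable {q : E → E → ℝ} {a b : ℝ≥0∞}

lemma denom_ne_zero (ha0 : a ≠ 0) (i : E) : a + dq q i ≠ 0 := by
  simp [ha0]

lemma denom_ne_top (hat : a ≠ ∞) (i : E) : a + dq q i ≠ ∞ :=
  ENNReal.add_ne_top.2 ⟨hat, dq_ne_top⟩

lemma opP_mono {f g : E → ℝ≥0∞} (h : ∀ j, f j ≤ g j) (i : E) :
    opP q a f i ≤ opP q a g i :=
  ENNReal.div_le_div_right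
    (ENNReal.tsum_le_tsum fun j => mul_le_mul_right (h j) _) _

lemma mul_opP (ha0 : a ≠ 0) (hat : a ≠ ∞) (f : E → ℝ≥0∞) (i : E) :
    (a + dq q i) * opP q a f i = ∑' j, Qe q i j * f j :=
  ENNReal.mul_div_cancel (denom_ne_zero ha0 i) (denom_ne_top hat i)

lemma opP_eq_self {v : E → ℝ≥0∞} (ha0 : a ≠ 0) (hat : a ≠ ∞)
    (hveq : ∀ i, ∑' j, Qe q i j * v j = (a + dq q i) * v i) (i : E) :
    opP q a v i = v i := by
  unfold opP
  rw [hveq i, mul_comm, mul_div_assoc,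
    ENNReal.div_self (denom_ne_zero ha0 i) (denom_ne_top hat i), mul_one]

lemma opP_le_one (hq : IsQMatrix q) (ha0 : a ≠ 0) {f : E → ℝ≥0∞}
    (hf : ∀ j, f j ≤ 1) (i : E) : opP q a f i ≤ 1 := by
  unfold opP
  refine ENNReal.div_le_of_le_mul ?_
  calc ∑' j, Qe q i j * f j ≤ dq q i := tsumQ_le_of_le_one hq hf i
  _ ≤ 1 * (a + dq q i) := by simpa using le_add_self

lemma opP_add (ha0 : a ≠ 0) (hat : a ≠ ∞) (f g : E → ℝ≥0∞) :
    opP q a (f + g) = opP q a f + opP q a g := by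
  funext i
  have : (fun j => Qe q i j * (f j + g j)) =
      fun j => Qe q i j * f j + Qe q i j * g j := by
    funext j; rw [mul_add]
  simp only [opP, Pi.add_apply, this, ENNReal.tsum_add, ENNReal.div_add_div_same]

lemma opP_mul_const (t : ℝ≥0∞) (f : E → ℝ≥0∞) (i : E) :
    opP q a (fun j => t * f j) i = t * opP q a f i := by
  unfold opP
  have : (fun j => Qe q i j * (t * f j)) = fun j => t * (Qe q i j * f j) := by
    funext j; ring
  rw [this, ENNReal.tsum_mul_left, mul_div_assoc]

lemma opP_anti (hab : a ≤ b) (f : E → ℝ≥0∞) (i : E) :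
    opP q b f i ≤ opP q a f i :=
  ENNReal.div_le_div_left (add_le_add_left hab _) _

end op

/-- Monotone convergence for `ℝ≥0∞`-valued `tsum`. -/
lemma tsum_iSup_mono {α : Type*} {g : ℕ → α → ℝ≥0∞}
    (hm : ∀ j, Monotone fun k => g k j) :
    ∑' j, ⨆ k, g k j = ⨆ k, ∑' j, g k j := by
  calc ∑' j, ⨆ k, g k j = ⨆ s : Finset α, ∑ j ∈ s, ⨆ k, g k j :=
        ENNReal.tsum_eq_iSup_sum
  _ = ⨆ s : Finset α, ⨆ k, ∑ j ∈ s, g k j :=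
        iSup_congr fun s => ENNReal.finsetSum_iSup_of_monotone fun j => hm j
  _ = ⨆ k, ⨆ s : Finset α, ∑ j ∈ s, g k j := iSup_comm
  _ = ⨆ k, ∑' j, g k j := iSup_congr fun k => ENNReal.tsum_eq_iSup_sum.symm

/-- A general `tsum_sub` for `ℝ≥0∞`. -/
lemma tsum_sub' {α : Type*} {f g : α → ℝ≥0∞} (h₁ : ∑' j, g j ≠ ∞) (h₂ : ∀ j, g j ≤ f j) :
    ∑' j, (f j - g j) = ∑' j, f j - ∑' j, g j := by
  have : ∀ j, f j - g j + g j = f j := fun j => tsub_add_cancel_of_le (h₂ j)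
  refine ENNReal.eq_sub_of_add_eq h₁ ?_
  rw [← ENNReal.tsum_add]
  simp only [this]

/-- Decreasing (dominated) convergence for `ℝ≥0∞`-valued `tsum`. -/
lemma tsum_iInf_anti {α : Type*} {g : ℕ → α → ℝ≥0∞} {G : α → ℝ≥0∞}
    (hanti : ∀ j, Antitone fun k => g k j) (hb : ∀ k j, g k j ≤ G j)
    (hG : ∑' j, G j ≠ ∞) :
    ∑' j, ⨅ k, g k j = ⨅ k, ∑' j, g k j := by
  have hgfin : ∀ k, ∑' j, g k j ≠ ∞ :=
    fun k => ne_top_of_le_ne_top hG (ENNReal.tsum_le_tsum (hb k))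
  have hifin : ∑' j, (⨅ k, g k j) ≠ ∞ :=
    ne_top_of_le_ne_top (hgfin 0) (ENNReal.tsum_le_tsum fun j => iInf_le _ 0)
  have subGi : ∀ j, (⨅ k, g k j) ≤ G j := fun j => (iInf_le _ 0).trans (hb 0 j)
  have lhs_eq : ∑' j, (G j - ⨅ k, g k j) = ∑' j, G j - ∑' j, (⨅ k, g k j) :=
    tsum_sub' hifin subGi
  have rhs_eq : ∀ k, ∑' j, (G j - g k j) = ∑' j, G j - ∑' j, g k j :=
    fun k => tsum_sub' (hgfin k) (hb k)
  have key : ∑' j, G j - ∑' j, (⨅ k, g k j) = ∑' j, G j - ⨅ k, ∑' j, g k j := by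
    rw [← lhs_eq]
    have h1 : ∀ j, G j - ⨅ k, g k j = ⨆ k, (G j - g k j) := fun j => ENNReal.sub_iInf
    have h2 : ∀ j, Monotone fun k => G j - g k j :=
      fun j k k' hk => tsub_le_tsub_left (hanti j hk) _
    simp only [h1]
    rw [tsum_iSup_mono h2, ENNReal.sub_iInf]
    exact iSup_congr fun k => rhs_eq k
  have h1 : ∑' j, (⨅ k, g k j) ≤ ∑' j, G j := ENNReal.tsum_le_tsum subGi
  have h2 : (⨅ k, ∑' j, g k j) ≤ ∑' j, G j :=
    (iInf_le _ 0).trans (ENNReal.tsum_le_tsum (hb 0))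
  exact (ENNReal.sub_right_inj hG h1 h2).1 key

section iter

variable {T T' : (E → ℝ≥0∞) → E → ℝ≥0∞}

lemma iter_add (hT : ∀ f g : E → ℝ≥0∞, T (f + g) = T f + T g) :
    ∀ (k : ℕ) (f g : E → ℝ≥0∞), T^[k] (f + g) = T^[k] f + T^[k] g := by
  intro k
  induction k with
  | zero => intro f g; simp
  | succ k ih =>
    intro f g
    rw [Function.iterate_succ_apply, Function.iterate_succ_apply,
      Function.iterate_succ_apply, hT, ih]

lemma iter_repr (hT : ∀ f g : E → ℝ≥0∞, T (f + g) = T f + T g)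
    {f h : E → ℝ≥0∞} (hf : f = T f + h) :
    ∀ k : ℕ, f = T^[k] f + ∑ m ∈ Finset.range k, T^[m] h := by
  intro k
  induction k with
  | zero => simp
  | succ k ih =>
    have h1 : T^[k] f = T^[k+1] f + T^[k] h := by
      conv_lhs => rw [hf]
      rw [iter_add hT, Function.iterate_succ_apply]
    rw [Finset.sum_range_succ]
    calc f = T^[k] f + ∑ m ∈ Finset.range k, T^[m] h := ih
    _ = T^[k+1] f + T^[k] h + ∑ m ∈ Finset.range k, T^[m] h := by rw [h1]
    _ = T^[k+1] f + (∑ m ∈ Finset.range k, T^[m] h + T^[k] h) := by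
        rw [add_assoc, add_comm (T^[k] h)]

lemma iter_mono2 (hTT' : ∀ f g : E → ℝ≥0∞, (∀ j, f j ≤ g j) → ∀ i, T f i ≤ T' g i) :
    ∀ (k : ℕ) (f g : E → ℝ≥0∞), (∀ j, f j ≤ g j) → ∀ i, T^[k] f i ≤ T'^[k] g i := by
  intro k
  induction k with
  | zero => intro f g h i; exact h i
  | succ k ih =>
    intro f g h i
    rw [Function.iterate_succ_apply, Function.iterate_succ_apply]
    exact ih _ _ (fun j => hTT' f g h j) i

lemma iter_tsub (hT : ∀ f g : E → ℝ≥0∞, T (f + g) = T f + T g)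
    (k : ℕ) {x y : E → ℝ≥0∞} (hyx : ∀ j, y j ≤ x j) (i : E)
    (hfin : T^[k] y i ≠ ∞) :
    T^[k] (x - y) i ≤ T^[k] x i - T^[k] y i := by
  have hxy : (x - y) + y = x := by
    funext j
    exact tsub_add_cancel_of_le (hyx j)
  have h0 := iter_add hT k (x - y) y
  rw [hxy] at h0
  have h2 : T^[k] (x - y) i + T^[k] y i = T^[k] x i := by
    conv_rhs => rw [h0]
    simp
  exact ENNReal.le_sub_of_add_le_right hfin h2.le

lemma tele_le (x : ℕ → ℝ≥0∞) (hx : ∀ m, x (m+1) ≤ x m) (k : ℕ) :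
    (∑ m ∈ Finset.range k, (x m - x (m+1))) ≤ x 0 := by
  have key : ∀ k, (∑ m ∈ Finset.range k, (x m - x (m+1))) + x k ≤ x 0 := by
    intro k
    induction k with
    | zero => simp
    | succ k ih =>
      rw [Finset.sum_range_succ, add_assoc, tsub_add_cancel_of_le (hx k)]
      exact ih
  exact le_trans le_self_add (key k)

end iter

lemma iSup_succ (x : ℕ → ℝ≥0∞) (hx : ∀ k, x k ≤ x (k+1)) :
    ⨆ k, x (k+1) = ⨆ k, x k := by
  refine le_antisymm (iSup_le fun k => le_iSup x (k+1)) (iSup_le fun k => ?_)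
  exact (hx k).trans (le_iSup (fun j => x (j+1)) k)

lemma iInf_succ (x : ℕ → ℝ≥0∞) (hx : ∀ k, x (k+1) ≤ x k) :
    ⨅ k, x (k+1) = ⨅ k, x k := by
  refine le_antisymm (le_iInf fun k => ?_) (le_iInf fun k => iInf_le x (k+1))
  exact (iInf_le (fun j => x (j+1)) k).trans (hx k)

lemma iInf_tail (x : ℕ → ℝ≥0∞) (hx : Antitone x) (b₀ : ℕ) :
    ⨅ b, x (b + b₀) = ⨅ b, x b := by
  refine le_antisymm (le_iInf fun b => ?_) (le_iInf fun b => iInf_le x (b + b₀))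
  exact (iInf_le (fun c => x (c + b₀)) b).trans (hx (Nat.le_add_right b b₀))

/-- `x ↦ x/(a+x)` is monotone on `ℝ≥0∞` (for finite inputs). -/
lemma div_frac_mono {a x y : ℝ≥0∞} (ha0 : a ≠ 0) (hat : a ≠ ∞) (hx : x ≠ ∞) (hy : y ≠ ∞)
    (hxy : x ≤ y) : x / (a + x) ≤ y / (a + y) := by
  have hax0 : a + x ≠ 0 := by simp [ha0]
  have haxt : a + x ≠ ∞ := ENNReal.add_ne_top.2 ⟨hat, hx⟩
  have hay0 : a + y ≠ 0 := by simp [ha0]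
  have hayt : a + y ≠ ∞ := ENNReal.add_ne_top.2 ⟨hat, hy⟩
  rw [ENNReal.div_le_iff hax0 haxt]
  have hrw : y / (a + y) * (a + x) = y * (a + x) / (a + y) := by
    rw [div_eq_mul_inv, mul_right_comm, ← div_eq_mul_inv]
  rw [hrw, ENNReal.le_div_iff_mul_le (Or.inl hay0) (Or.inl hayt)]
  calc x * (a + y) = x*a + x*y := by rw [mul_add]
  _ ≤ y*a + y*x := add_le_add (mul_le_mul_left hxy a) (le_of_eq (mul_comm x y))
  _ = y * (a + x) := by rw [mul_add]

section forward

variable {q : E → E → ℝ}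

/-- Iteration computing the "discounted hitting probability" of `B`. -/
noncomputable def hseq (q : E → E → ℝ) (B : Set E) : ℕ → E → ℝ≥0∞
  | 0 => fun i => if i ∈ B then 1 else 0
  | (k+1) => fun i => if i ∈ B then 1 else opP q 1 (hseq q B k) i

/-- The (analytic) discounted hitting probability of `B`. -/
noncomputable def hB (q : E → E → ℝ) (B : Set E) : E → ℝ≥0∞ :=
  fun i => ⨆ k, hseq q B k i

lemma hseq_le_one (hq : IsQMatrix q) (B : Set E) : ∀ k i, hseq q B k i ≤ 1 := by
  intro k
  induction k with
  | zero =>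
    intro i
    by_cases h : i ∈ B <;> simp [hseq, h]
  | succ k ih =>
    intro i
    by_cases h : i ∈ B
    · simp [hseq, h]
    · simpa [hseq, h] using opP_le_one hq one_ne_zero ih i

lemma hseq_mono (hq : IsQMatrix q) (B : Set E) : ∀ k i, hseq q B k i ≤ hseq q B (k+1) i := by
  intro k
  induction k with
  | zero =>
    intro i
    by_cases h : i ∈ B <;> simp [hseq, h]
  | succ k ih =>
    intro i
    by_cases h : i ∈ B
    · simp [hseq, h]
    · simpa [hseq, h] using opP_mono ih i

lemma hseq_monotone (hq : IsQMatrix q) (B : Set E) (i : E) :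
    Monotone fun k => hseq q B k i :=
  monotone_nat_of_le_succ fun k => hseq_mono hq B k i

lemma hseq_subset (hq : IsQMatrix q) {B B' : Set E} (hBB : B ⊆ B') :
    ∀ k i, hseq q B k i ≤ hseq q B' k i := by
  intro k
  induction k with
  | zero =>
    intro i
    by_cases h : i ∈ B
    · simp [hseq, h, hBB h]
    · simp [hseq, h]
  | succ k ih =>
    intro i
    by_cases h' : i ∈ B'
    · calc hseq q B (k+1) i ≤ 1 := hseq_le_one hq B _ i
      _ = hseq q B' (k+1) i := by simp [hseq, h']
    · have h : i ∉ B := fun hc => h' (hBB hc)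
      simpa [hseq, h, h'] using opP_mono ih i

lemma hB_le_one (hq : IsQMatrix q) (B : Set E) (i : E) : hB q B i ≤ 1 :=
  iSup_le fun k => hseq_le_one hq B k i

lemma hB_ne_top (hq : IsQMatrix q) (B : Set E) (i : E) : hB q B i ≠ ∞ :=
  ne_top_of_le_ne_top one_ne_top (hB_le_one hq B i)

lemma hB_one_of_mem (hq : IsQMatrix q) {B : Set E} {i : E} (hi : i ∈ B) :
    hB q B i = 1 := by
  refine le_antisymm (hB_le_one hq B i) ?_
  have : hseq q B 0 i = 1 := by simp [hseq, hi]
  rw [← this]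
  exact le_iSup (fun k => hseq q B k i) 0

lemma hB_subset (hq : IsQMatrix q) {B B' : Set E} (hBB : B ⊆ B') (i : E) :
    hB q B i ≤ hB q B' i :=
  iSup_le fun k => (hseq_subset hq hBB k i).trans (le_iSup (fun k => hseq q B' k i) k)

lemma tsum_hB (hq : IsQMatrix q) (B : Set E) (i : E) :
    ∑' j, Qe q i j * hB q B j = (1 + dq q i) * ⨆ k, opP q 1 (hseq q B k) i := by
  have h1 : ∀ j, Qe q i j * hB q B j = ⨆ k, Qe q i j * hseq q B k j := by
    intro j
    exact ENNReal.mul_iSup _ _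
  have h2 : ∀ j, Monotone fun k => Qe q i j * hseq q B k j :=
    fun j k k' hk => mul_le_mul_right (hseq_monotone hq B j hk) _
  calc ∑' j, Qe q i j * hB q B j = ∑' j, ⨆ k, Qe q i j * hseq q B k j := by
        simp only [h1]
  _ = ⨆ k, ∑' j, Qe q i j * hseq q B k j := tsum_iSup_mono h2
  _ = ⨆ k, (1 + dq q i) * opP q 1 (hseq q B k) i := by
        exact iSup_congr fun k => (mul_opP one_ne_zero one_ne_top _ i).symm
  _ = (1 + dq q i) * ⨆ k, opP q 1 (hseq q B k) i := (ENNReal.mul_iSup _ _).symm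

lemma hB_super (hq : IsQMatrix q) (B : Set E) (i : E) :
    ∑' j, Qe q i j * hB q B j ≤ (1 + dq q i) * hB q B i := by
  rw [tsum_hB hq B i]
  refine mul_le_mul_right (iSup_le fun k => ?_) _
  have h : opP q 1 (hseq q B k) i ≤ hseq q B (k+1) i := by
    by_cases hi : i ∈ B
    · calc opP q 1 (hseq q B k) i ≤ 1 := opP_le_one hq one_ne_zero (hseq_le_one hq B k) i
      _ = hseq q B (k+1) i := by simp [hseq, hi]
    · simp [hseq, hi]
  exact h.trans (le_iSup (fun k => hseq q B k i) (k+1))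

lemma hB_eq_of_not_mem (hq : IsQMatrix q) {B : Set E} {i : E} (hi : i ∉ B) :
    ∑' j, Qe q i j * hB q B j = (1 + dq q i) * hB q B i := by
  rw [tsum_hB hq B i]
  congr 1
  have h : ∀ k, opP q 1 (hseq q B k) i = hseq q B (k+1) i := by
    intro k; simp [hseq, hi]
  calc ⨆ k, opP q 1 (hseq q B k) i = ⨆ k, hseq q B (k+1) i := iSup_congr h
  _ = hB q B i := iSup_succ _ (fun k => hseq_mono hq B k i)

/-- The sets of states with large rates. -/
def Bs (q : E → E → ℝ) (b : ℕ) : Set E := {j | (b : ℝ) < -q j j}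

lemma Bs_anti {b b' : ℕ} (h : b ≤ b') : Bs q b' ⊆ Bs q b := by
  intro j hj
  have hbb : (b : ℝ) ≤ (b' : ℝ) := by exact_mod_cast h
  exact lt_of_le_of_lt hbb hj

/-- The infimum over `b` of hitting probabilities of `{q > b}`; a `1`-solution. -/
noncomputable def hhat (q : E → E → ℝ) : E → ℝ≥0∞ := fun i => ⨅ b : ℕ, hB q (Bs q b) i

lemma hhat_anti (hq : IsQMatrix q) (i : E) : Antitone fun b : ℕ => hB q (Bs q b) i :=
  fun b b' hb => hB_subset hq (Bs_anti hb) i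

lemma hhat_le_one (hq : IsQMatrix q) (i : E) : hhat q i ≤ 1 :=
  (iInf_le _ 0).trans (hB_le_one hq _ i)

lemma hhat_sol (hq : IsQMatrix q) (i : E) :
    ∑' j, Qe q i j * hhat q j = (1 + dq q i) * hhat q i := by
  obtain ⟨b₀, hb₀⟩ := exists_nat_ge (-q i i)
  have hnotmem : ∀ b : ℕ, b₀ ≤ b → i ∉ Bs q b := by
    intro b hb hmem
    exact absurd (lt_of_le_of_lt (hb₀.trans (by exact_mod_cast hb)) hmem) (lt_irrefl _)
  have hanti : ∀ j, Antitone fun b : ℕ => Qe q i j * hB q (Bs q b) j :=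
    fun j b b' hb => mul_le_mul_right (hhat_anti hq j hb) _
  have hdom : ∀ (b : ℕ) j, Qe q i j * hB q (Bs q b) j ≤ Qe q i j :=
    fun b j => by simpa using mul_le_mul_right (hB_le_one hq _ j) (Qe q i j)
  have hGfin : ∑' j, Qe q i j ≠ ∞ := by rw [Qsum hq i]; exact dq_ne_top
  have hmulinf : ∀ j, Qe q i j * hhat q j = ⨅ b : ℕ, Qe q i j * hB q (Bs q b) j := by
    intro j
    exact ENNReal.mul_iInf (fun h => absurd h Qe_ne_top)
  calc ∑' j, Qe q i j * hhat q j
      = ∑' j, ⨅ b : ℕ, Qe q i j * hB q (Bs q b) j := by simp only [hmulinf]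
  _ = ⨅ b : ℕ, ∑' j, Qe q i j * hB q (Bs q b) j := tsum_iInf_anti hanti (fun b j => hdom b j) hGfin
  _ = ⨅ b : ℕ, ∑' j, Qe q i j * hB q (Bs q (b + b₀)) j := by
      refine (iInf_tail _ ?_ b₀).symm
      intro b b' hb
      exact ENNReal.tsum_le_tsum fun j => hanti j hb
  _ = ⨅ b : ℕ, (1 + dq q i) * hB q (Bs q (b + b₀)) i := by
      refine iInf_congr fun b => hB_eq_of_not_mem hq (hnotmem _ (Nat.le_add_left b₀ b))
  _ = ⨅ b : ℕ, (1 + dq q i) * hB q (Bs q b) i := by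
      exact iInf_tail (fun b => (1 + dq q i) * hB q (Bs q b) i)
        (fun b b' hb => mul_le_mul_right (hhat_anti hq i hb) _) b₀
  _ = (1 + dq q i) * hhat q i := by
      refine (ENNReal.mul_iInf ?_).symm
      intro h
      exact absurd h (ENNReal.add_ne_top.2 ⟨one_ne_top, dq_ne_top⟩)

end forward

section convert

variable {q : E → E → ℝ}

lemma ofReal_ite_eq (hq : IsQMatrix q) {u : E → ℝ} (hu : ∀ j, 0 ≤ u j) (i : E) :
    ∀ j, ENNReal.ofReal (if j = i then 0 else q i j * u j)
      = Qe q i j * ENNReal.ofReal (u j) := by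
  intro j
  by_cases h : j = i
  · simp [h, Qe]
  · rw [if_neg h]
    unfold Qe
    rw [if_neg h, ← ENNReal.ofReal_mul (hq.1 i j (Ne.symm h))]

lemma ite_nonneg (hq : IsQMatrix q) {u : E → ℝ} (hu : ∀ j, 0 ≤ u j) (i : E) :
    ∀ j, 0 ≤ (if j = i then 0 else q i j * u j) := by
  intro j
  by_cases h : j = i
  · simp [h]
  · rw [if_neg h]
    exact mul_nonneg (hq.1 i j (Ne.symm h)) (hu j)

/-- Convert a real `lam`-solution into an `ℝ≥0∞` eigen-equation. -/
lemma sol_toENN (hq : IsQMatrix q) {lam : ℝ} (hlam : 0 < lam) {u : E → ℝ}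
    (hsol : IsLamSolution q lam u) (i : E) :
    ∑' j, Qe q i j * ENNReal.ofReal (u j)
      = (ENNReal.ofReal lam + dq q i) * ENNReal.ofReal (u i) := by
  have hu0 : ∀ j, 0 ≤ u j := fun j => (hsol.1 j).1
  have hs := hsol.2 i
  have hnn := ite_nonneg hq hu0 i
  have h1 : ∑' j, ENNReal.ofReal (if j = i then 0 else q i j * u j)
      = ENNReal.ofReal ((lam + -q i i) * u i) := by
    rw [← ENNReal.ofReal_tsum_of_nonneg hnn hs.summable, hs.tsum_eq]
  have h2 := ofReal_ite_eq hq hu0 i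
  simp only [h2] at h1
  have hqi : 0 ≤ -q i i := neg_nonneg.2 (hq.2.1 i)
  rw [h1, ENNReal.ofReal_mul (by linarith : (0:ℝ) ≤ lam + -q i i),
    ENNReal.ofReal_add hlam.le hqi]
  rfl

/-- Convert an `ℝ≥0∞` eigen-equation into a real `lam`-solution. -/
lemma sol_toReal (hq : IsQMatrix q) {lam : ℝ} (hlam : 0 < lam) {v : E → ℝ≥0∞}
    (hv1 : ∀ i, v i ≤ 1)
    (hveq : ∀ i, ∑' j, Qe q i j * v j = (ENNReal.ofReal lam + dq q i) * v i) :
    IsLamSolution q lam (fun i => (v i).toReal) := by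
  have hvfin : ∀ i, v i ≠ ∞ := fun i => ne_top_of_le_ne_top one_ne_top (hv1 i)
  constructor
  · intro i
    refine ⟨ENNReal.toReal_nonneg, ?_⟩
    simpa using ENNReal.toReal_mono one_ne_top (hv1 i)
  · intro i
    set f : E → ℝ := fun j => if j = i then 0 else q i j * (v j).toReal with hf
    have hofr : ∀ j, ENNReal.ofReal (f j) = Qe q i j * v j := by
      intro j
      have := ofReal_ite_eq hq (u := fun j => (v j).toReal)
        (fun j => ENNReal.toReal_nonneg) i j
      rw [hf]
      simp only [this, ENNReal.ofReal_toReal (hvfin j)]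
    have hterm_fin : ∀ j, Qe q i j * v j ≠ ∞ :=
      fun j => ENNReal.mul_ne_top Qe_ne_top (hvfin j)
    have hsum_fin : ∑' j, Qe q i j * v j ≠ ∞ := by
      rw [hveq i]
      exact ENNReal.mul_ne_top
        (ENNReal.add_ne_top.2 ⟨ENNReal.ofReal_ne_top, dq_ne_top⟩) (hvfin i)
    have hfeq : ∀ j, f j = (Qe q i j * v j).toReal := by
      intro j
      rw [← hofr j, ENNReal.toReal_ofReal (ite_nonneg hq (fun j => ENNReal.toReal_nonneg) i j)]
    have hsumm : Summable f := by
      have := ENNReal.summable_toReal hsum_fin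
      simpa only [← hfeq] using this
    have htsum : ∑' j, f j = ((ENNReal.ofReal lam + dq q i) * v i).toReal := by
      rw [← hveq i, ENNReal.tsum_toReal_eq hterm_fin]
      exact tsum_congr hfeq
    have hval : ((ENNReal.ofReal lam + dq q i) * v i).toReal
        = (lam + -q i i) * (v i).toReal := by
      rw [ENNReal.toReal_mul, ENNReal.toReal_add ENNReal.ofReal_ne_top dq_ne_top,
        ENNReal.toReal_ofReal hlam.le]
      congr 2
      exact ENNReal.toReal_ofReal (neg_nonneg.2 (hq.2.1 i))
    have : ∑' j, f j = (lam + -q i i) * (v i).toReal := by rw [htsum, hval]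
    exact this ▸ hsumm.hasSum

/-- Convert an `ℝ≥0∞` drift inequality into the real `DriftLE` with constant `1`. -/
lemma drift_toReal (hq : IsQMatrix q) {ψ : E → ℝ≥0∞} (hfin : ∀ i, ψ i ≠ ∞)
    (hdr : ∀ i, ∑' j, Qe q i j * ψ j ≤ (1 + dq q i) * ψ i) :
    DriftLE q (fun i => (ψ i).toReal) 1 := by
  intro i
  set f : E → ℝ := fun j => if j = i then 0 else q i j * (ψ j).toReal with hf
  have hofr : ∀ j, ENNReal.ofReal (f j) = Qe q i j * ψ j := by
    intro j
    have := ofReal_ite_eq hq (u := fun j => (ψ j).toReal)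
      (fun j => ENNReal.toReal_nonneg) i j
    rw [hf]
    simp only [this, ENNReal.ofReal_toReal (hfin j)]
  have hterm_fin : ∀ j, Qe q i j * ψ j ≠ ∞ :=
    fun j => ENNReal.mul_ne_top Qe_ne_top (hfin j)
  have hrhs_fin : (1 + dq q i) * ψ i ≠ ∞ :=
    ENNReal.mul_ne_top (ENNReal.add_ne_top.2 ⟨one_ne_top, dq_ne_top⟩) (hfin i)
  have hsum_fin : ∑' j, Qe q i j * ψ j ≠ ∞ := ne_top_of_le_ne_top hrhs_fin (hdr i)
  have hfeq : ∀ j, f j = (Qe q i j * ψ j).toReal := by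
    intro j
    rw [← hofr j, ENNReal.toReal_ofReal (ite_nonneg hq (fun j => ENNReal.toReal_nonneg) i j)]
  have hsumm : Summable f := by
    have := ENNReal.summable_toReal hsum_fin
    simpa only [← hfeq] using this
  refine ⟨hsumm, ?_⟩
  have htsum : ∑' j, f j = (∑' j, Qe q i j * ψ j).toReal := by
    rw [ENNReal.tsum_toReal_eq hterm_fin]
    exact tsum_congr hfeq
  have hle : (∑' j, Qe q i j * ψ j).toReal ≤ ((1 + dq q i) * ψ i).toReal :=
    ENNReal.toReal_mono hrhs_fin (hdr i)
  have hdq : (dq q i).toReal = -q i i := ENNReal.toReal_ofReal (neg_nonneg.2 (hq.2.1 i))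
  have hval : ((1 + dq q i) * ψ i).toReal = (1 + -q i i) * (ψ i).toReal := by
    rw [ENNReal.toReal_mul, ENNReal.toReal_add one_ne_top dq_ne_top,
      ENNReal.toReal_one, hdq]
  have hdqval : (dq q i).toReal = -q i i := ENNReal.toReal_ofReal (neg_nonneg.2 (hq.2.1 i))
  rw [htsum] at *
  rw [hval] at hle
  nlinarith [ENNReal.toReal_nonneg (a := ψ i)]

/-- Convert the real drift condition `DriftLE q φ c` into an `ℝ≥0∞` inequality
with the nonnegative constant `max c 0 + 1`. -/
lemma drift_toENN (hq : IsQMatrix q) {φ : E → ℝ} {c : ℝ} (hφ0 : ∀ i, 0 ≤ φ i)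
    (hdr : DriftLE q φ c) (i : E) :
    ∑' j, Qe q i j * ENNReal.ofReal (φ j)
      ≤ (ENNReal.ofReal (max c 0 + 1) + dq q i) * ENNReal.ofReal (φ i) := by
  obtain ⟨hsumm, hineq⟩ := hdr i
  have h1 : ∑' j, Qe q i j * ENNReal.ofReal (φ j)
      = ENNReal.ofReal (∑' j, if j = i then 0 else q i j * φ j) := by
    rw [ENNReal.ofReal_tsum_of_nonneg (ite_nonneg hq hφ0 i) hsumm]
    exact (tsum_congr (ofReal_ite_eq hq hφ0 i)).symm
  rw [h1]
  have h2 : (∑' j, if j = i then 0 else q i j * φ j) ≤ (max c 0 + 1 + -q i i) * φ i := by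
    have hc : c * φ i ≤ (max c 0 + 1) * φ i :=
      mul_le_mul_of_nonneg_right (by linarith [le_max_left c 0]) (hφ0 i)
    rw [add_mul]
    linarith [hineq, hc]
  have hnn1 : (0:ℝ) ≤ max c 0 + 1 := by positivity
  have hnn2 : (0:ℝ) ≤ -q i i := neg_nonneg.2 (hq.2.1 i)
  calc ENNReal.ofReal (∑' j, if j = i then 0 else q i j * φ j)
      ≤ ENNReal.ofReal ((max c 0 + 1 + -q i i) * φ i) := ENNReal.ofReal_le_ofReal h2
  _ = (ENNReal.ofReal (max c 0 + 1) + dq q i) * ENNReal.ofReal (φ i) := by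
      rw [ENNReal.ofReal_mul (by linarith), ENNReal.ofReal_add hnn1 hnn2]
      rfl

end convert

section forwardmain

variable {q : E → E → ℝ}

lemma forward_main [Countable E] (hq : IsQMatrix q)
    (hu : ∀ lam : ℝ, 0 < lam → ∀ u : E → ℝ, IsLamSolution q lam u → u = 0) :
    ∃ (En : ℕ → Set E) (φ : E → ℝ),
      (∀ n, En n ⊆ En (n + 1)) ∧
      (⋃ n, En n) = Set.univ ∧
      (∀ n, ∃ M : ℝ, ∀ i ∈ En n, -q i i ≤ M) ∧
      (∀ i, 0 ≤ φ i) ∧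
      (∀ M : ℝ, ∃ N : ℕ, ∀ n ≥ N, ∀ i ∉ En n, M ≤ φ i) ∧
      (∃ c : ℝ, DriftLE q φ c) := by
  rcases isEmpty_or_nonempty E with hE | hE
  · refine ⟨fun _ => Set.univ, 0, fun n => subset_rfl, Set.iUnion_const _, ?_, fun i => le_refl _, ?_, ?_⟩
    · exact fun n => ⟨0, fun i _ => (IsEmpty.false i).elim⟩
    · exact fun M => ⟨0, fun n _ i _ => (IsEmpty.false i).elim⟩
    · exact ⟨0, fun i => (IsEmpty.false i).elim⟩
  -- `hhat = 0` by uniqueness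
  obtain ⟨e, hsurj⟩ := exists_surjective_nat E
  have hhat_eq : ∀ i, ∑' j, Qe q i j * hhat q j
      = (ENNReal.ofReal 1 + dq q i) * hhat q i := by
    intro i
    rw [ENNReal.ofReal_one]
    exact hhat_sol hq i
  have hzero : ∀ i, hhat q i = 0 := by
    have hrsol := sol_toReal hq one_pos (fun i => hhat_le_one hq i) hhat_eq
    have := hu 1 one_pos _ hrsol
    intro i
    have h0 : (hhat q i).toReal = 0 := by
      have := congrFun this i
      simpa using this
    rcases (ENNReal.toReal_eq_zero_iff _).1 h0 with h | h
    · exact h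
    · exact absurd h (ne_top_of_le_ne_top one_ne_top (hhat_le_one hq i))
  -- diagonal selection
  have hsel : ∀ m : ℕ, ∃ b : ℕ, ∀ j, j ≤ m → hB q (Bs q b) (e j) ≤ (2:ℝ≥0∞)⁻¹ ^ m := by
    intro m
    have hpos : (0:ℝ≥0∞) < 2⁻¹ ^ m :=
      ENNReal.pow_pos (by norm_num) m
    have hch : ∀ j : ℕ, ∃ b : ℕ, hB q (Bs q b) (e j) < 2⁻¹ ^ m := by
      intro j
      have hlt : (⨅ b : ℕ, hB q (Bs q b) (e j)) < 2⁻¹ ^ m := by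
        have := hzero (e j)
        unfold hhat at this
        rw [this]
        exact hpos
      exact iInf_lt_iff.mp hlt
    choose bf hbf using hch
    refine ⟨(Finset.range (m+1)).sup bf, fun j hj => ?_⟩
    have hle : bf j ≤ (Finset.range (m+1)).sup bf :=
      Finset.le_sup (Finset.mem_range.mpr (Nat.lt_succ_of_le hj))
    exact le_trans (hhat_anti hq (e j) hle) (hbf j).le
  choose g hg using hsel
  set bfun : ℕ → ℕ := fun m => m + (Finset.range (m+1)).sup g with hbfun
  have hbfun_mono : Monotone bfun := by
    intro m m' h
    exact add_le_add h (Finset.sup_mono (Finset.range_subset_range.2 (Nat.succ_le_succ h)))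
  have hgb : ∀ m, g m ≤ bfun m := by
    intro m
    exact le_trans (Finset.le_sup (Finset.mem_range.mpr (Nat.lt_succ_self m))) le_add_self
  have hsmall : ∀ m j, j ≤ m → hB q (Bs q (bfun m)) (e j) ≤ (2:ℝ≥0∞)⁻¹ ^ m :=
    fun m j hj => le_trans (hhat_anti hq (e j) (hgb m)) (hg m j hj)
  -- the Lyapunov function
  set φ' : E → ℝ≥0∞ := fun i => ∑' m, hB q (Bs q (bfun m)) i with hφ'
  have hφ'fin : ∀ i, φ' i ≠ ∞ := by
    intro i
    obtain ⟨j, rfl⟩ := hsurj i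
    have hbd : ∀ m, hB q (Bs q (bfun m)) (e j)
        ≤ (if m < j then (1:ℝ≥0∞) else 0) + 2⁻¹ ^ m := by
      intro m
      by_cases h : m < j
      · simp only [if_pos h]
        exact le_add_right (hB_le_one hq _ _)
      · simp only [if_neg h]
        rw [zero_add]
        exact hsmall m j (Nat.le_of_not_lt h)
    have h1 : ∑' m, (if m < j then (1:ℝ≥0∞) else 0) = j := by
      rw [tsum_eq_sum (s := Finset.range j) (fun m hm => if_neg (by simpa using hm))]
      rw [Finset.sum_congr rfl (fun m hm => if_pos (Finset.mem_range.1 hm))]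
      simp
    have h2 : ∑' m : ℕ, (2:ℝ≥0∞)⁻¹ ^ m = 2 := by
      rw [ENNReal.tsum_geometric]
      have : (1:ℝ≥0∞) - 2⁻¹ = 2⁻¹ := by
        conv_lhs => rw [← ENNReal.inv_two_add_inv_two]
        rw [ENNReal.add_sub_cancel_right (by simp)]
      rw [this, inv_inv]
    have : φ' (e j) ≤ (j : ℝ≥0∞) + 2 := by
      calc φ' (e j) ≤ ∑' m, ((if m < j then (1:ℝ≥0∞) else 0) + 2⁻¹ ^ m) :=
            ENNReal.tsum_le_tsum hbd
      _ = (j : ℝ≥0∞) + 2 := by rw [ENNReal.tsum_add, h1, h2]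
    exact ne_top_of_le_ne_top (by simp) this
  have hdrift' : ∀ i, ∑' j, Qe q i j * φ' j ≤ (1 + dq q i) * φ' i := by
    intro i
    calc ∑' j, Qe q i j * φ' j
        = ∑' j, ∑' m, Qe q i j * hB q (Bs q (bfun m)) j := by
          exact tsum_congr fun j => ENNReal.tsum_mul_left.symm
    _ = ∑' m, ∑' j, Qe q i j * hB q (Bs q (bfun m)) j := ENNReal.tsum_comm
    _ ≤ ∑' m, (1 + dq q i) * hB q (Bs q (bfun m)) i :=
          ENNReal.tsum_le_tsum fun m => hB_super hq _ i
    _ = (1 + dq q i) * φ' i := ENNReal.tsum_mul_left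
  refine ⟨fun n => {i | φ' i < (n:ℝ≥0∞) + 1}, fun i => (φ' i).toReal, ?_, ?_, ?_, ?_, ?_, ?_⟩
  · intro n i hi
    have hi' : φ' i < (n:ℝ≥0∞) + 1 := hi
    show φ' i < ((n+1 : ℕ):ℝ≥0∞) + 1
    refine lt_of_lt_of_le hi' ?_
    push_cast
    exact add_le_add_left (by norm_num) 1
  · refine Set.eq_univ_of_forall fun i => ?_
    obtain ⟨n, hn⟩ := ENNReal.exists_nat_gt (hφ'fin i)
    exact Set.mem_iUnion.2 ⟨n, lt_of_lt_of_le hn le_self_add⟩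
  · intro n
    refine ⟨(bfun n : ℝ), fun i hi => ?_⟩
    by_contra hcon
    push_neg at hcon
    have hmem : ∀ m, m ≤ n → i ∈ Bs q (bfun m) := by
      intro m hm
      have : (bfun m : ℝ) ≤ (bfun n : ℝ) := by exact_mod_cast hbfun_mono hm
      exact lt_of_le_of_lt this hcon
    have hgee : ((n:ℝ≥0∞) + 1) ≤ φ' i := by
      have : ∀ m ∈ Finset.range (n+1), hB q (Bs q (bfun m)) i = 1 :=
        fun m hm => hB_one_of_mem hq (hmem m (Nat.lt_succ_iff.1 (Finset.mem_range.1 hm)))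
      calc ((n:ℝ≥0∞) + 1) = ∑ m ∈ Finset.range (n+1), (1:ℝ≥0∞) := by
            simp [Nat.cast_succ]
      _ = ∑ m ∈ Finset.range (n+1), hB q (Bs q (bfun m)) i :=
            (Finset.sum_congr rfl this).symm
      _ ≤ φ' i := ENNReal.sum_le_tsum _
    exact absurd hi (not_lt.2 hgee)
  · exact fun i => ENNReal.toReal_nonneg
  · intro M
    refine ⟨Nat.ceil M, fun n hn i hi => ?_⟩
    have h1 : ((n:ℝ≥0∞) + 1) ≤ φ' i := not_lt.1 hi
    have h2 : ENNReal.ofReal ((n:ℝ) + 1) ≤ φ' i := by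
      rw [ENNReal.ofReal_add (by positivity) zero_le_one]
      simpa using h1
    have h3 : (n:ℝ) + 1 ≤ (φ' i).toReal :=
      (ENNReal.ofReal_le_iff_le_toReal (hφ'fin i)).1 h2
    have h4 : M ≤ (n:ℝ) := le_trans (Nat.le_ceil M) (by exact_mod_cast hn)
    linarith
  · exact ⟨1, drift_toReal hq hφ'fin hdrift'⟩

end forwardmain

section killed

variable {q : E → E → ℝ}

/-- The kernel killed outside `A`. -/
noncomputable def TA (q : E → E → ℝ) (a : ℝ≥0∞) (A : Set E) (f : E → ℝ≥0∞) : E → ℝ≥0∞ :=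
  opP q a (fun j => if j ∈ A then f j else 0)

lemma TA_add {a : ℝ≥0∞} (ha0 : a ≠ 0) (hat : a ≠ ∞) (A : Set E) (f g : E → ℝ≥0∞) :
    TA q a A (f + g) = TA q a A f + TA q a A g := by
  unfold TA
  have h : (fun j => if j ∈ A then (f + g) j else 0)
      = (fun j => if j ∈ A then f j else 0) + (fun j => if j ∈ A then g j else 0) := by
    funext j
    by_cases hj : j ∈ A <;> simp [hj]
  rw [h, opP_add ha0 hat]

lemma TA_mono {a : ℝ≥0∞} {A : Set E} {f g : E → ℝ≥0∞} (h : ∀ j, f j ≤ g j) (i : E) :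
    TA q a A f i ≤ TA q a A g i := by
  refine opP_mono (fun j => ?_) i
  by_cases hj : j ∈ A <;> simp [hj, h j]

lemma TA_cmp {a a' : ℝ≥0∞} (haa : a' ≤ a) {A : Set E} {f g : E → ℝ≥0∞}
    (h : ∀ j, f j ≤ g j) (i : E) : TA q a A f i ≤ TA q a' A g i :=
  (TA_mono h i).trans (opP_anti haa _ i)

lemma TA_mul_const {a : ℝ≥0∞} {A : Set E} (t : ℝ≥0∞) (f : E → ℝ≥0∞) :
    TA q a A (fun j => t * f j) = fun i => t * TA q a A f i := by
  unfold TA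
  have h : (fun j => if j ∈ A then t * f j else 0)
      = fun j => t * (if j ∈ A then f j else 0) := by
    funext j
    by_cases hj : j ∈ A <;> simp [hj]
  rw [h]
  funext i
  exact opP_mul_const t _ i

lemma TA_le_self (hq : IsQMatrix q) {a : ℝ≥0∞} {A : Set E} (f : E → ℝ≥0∞) (i : E) :
    TA q a A f i ≤ opP q a f i := by
  refine opP_mono (fun j => ?_) i
  by_cases hj : j ∈ A <;> simp [hj]

lemma opP_split {a : ℝ≥0∞} (A : Set E) (f : E → ℝ≥0∞) (i : E) :
    opP q a f i = TA q a A f i + opP q a (fun j => if j ∈ A then 0 else f j) i := by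
  unfold TA opP
  rw [ENNReal.div_add_div_same]
  congr 1
  rw [← ENNReal.tsum_add]
  refine tsum_congr fun j => ?_
  by_cases hj : j ∈ A <;> simp [hj, mul_add]

lemma TA_theta (hq : IsQMatrix q) {L' K : ℝ≥0∞} (hL0 : L' ≠ 0) (hLt : L' ≠ ∞)
    (hKt : K ≠ ∞) {A : Set E} (hKA : ∀ j ∈ A, dq q j ≤ K)
    {f : E → ℝ≥0∞} {t : ℝ≥0∞} (hf : ∀ j ∈ A, f j ≤ t) {i : E} (hi : i ∈ A) :
    TA q L' A f i ≤ t * (K / (L' + K)) := by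
  have h1 : ∀ j, (if j ∈ A then f j else 0) ≤ t * (if j ∈ A then 1 else 0) := by
    intro j
    by_cases hj : j ∈ A <;> simp [hj, hf j]
  have h2 : ∑' j, Qe q i j * (if j ∈ A then f j else 0)
      ≤ t * dq q i := by
    calc ∑' j, Qe q i j * (if j ∈ A then f j else 0)
        ≤ ∑' j, Qe q i j * (t * (if j ∈ A then 1 else 0)) :=
          ENNReal.tsum_le_tsum fun j => mul_le_mul_right (h1 j) _
    _ = t * ∑' j, Qe q i j * (if j ∈ A then 1 else 0) := by
        rw [← ENNReal.tsum_mul_left]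
        exact tsum_congr fun j => by ring
    _ ≤ t * ∑' j, Qe q i j := by
        refine mul_le_mul_right (ENNReal.tsum_le_tsum fun j => ?_) t
        by_cases hj : j ∈ A <;> simp [hj]
    _ = t * dq q i := by rw [Qsum hq i]
  calc TA q L' A f i ≤ (t * dq q i) / (L' + dq q i) := ENNReal.div_le_div_right h2 _
  _ = t * (dq q i / (L' + dq q i)) := mul_div_assoc _ _ _
  _ ≤ t * (K / (L' + K)) :=
      mul_le_mul_right (div_frac_mono hL0 hLt dq_ne_top hKt (hKA i hi)) t

end killed

section iter2

variable {T : (E → ℝ≥0∞) → E → ℝ≥0∞}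

lemma iter_mul_const (hT : ∀ (t : ℝ≥0∞) (f : E → ℝ≥0∞), T (fun j => t * f j) = fun i => t * T f i) :
    ∀ (k : ℕ) (t : ℝ≥0∞) (f : E → ℝ≥0∞), T^[k] (fun j => t * f j) = fun i => t * T^[k] f i := by
  intro k
  induction k with
  | zero => intro t f; rfl
  | succ k ih =>
    intro t f
    rw [Function.iterate_succ_apply, Function.iterate_succ_apply, hT, ih]

end iter2

section step1

variable {q : E → E → ℝ}

/-- Under (U1)+(U2), any `[0,1]`-valued solution at a large rate `lam'` vanishes. -/
lemma step1 (hq : IsQMatrix q) {En : ℕ → Set E} {φ : E → ℝ} {c : ℝ}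
    (hEmono : ∀ n, En n ⊆ En (n + 1)) (hEuniv : (⋃ n, En n) = Set.univ)
    (hEbdd : ∀ n, ∃ M : ℝ, ∀ i ∈ En n, -q i i ≤ M)
    (hφ0 : ∀ i, 0 ≤ φ i) (hesc : ∀ M : ℝ, ∃ N : ℕ, ∀ n ≥ N, ∀ i ∉ En n, M ≤ φ i)
    (hdr : DriftLE q φ c) {lam' : ℝ} (hlam' : max c 0 + 1 ≤ lam')
    {v : E → ℝ≥0∞} (hv1 : ∀ i, v i ≤ 1)
    (hveq : ∀ i, ∑' j, Qe q i j * v j = (ENNReal.ofReal lam' + dq q i) * v i) :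
    ∀ i, v i = 0 := by
  intro i₀
  have hc1 : (0:ℝ) < max c 0 + 1 := by positivity
  have hlampos : (0:ℝ) < lam' := lt_of_lt_of_le hc1 hlam'
  set L' : ℝ≥0∞ := ENNReal.ofReal lam' with hL'
  set C : ℝ≥0∞ := ENNReal.ofReal (max c 0 + 1) with hC
  have hL0 : L' ≠ 0 := (ENNReal.ofReal_pos.2 hlampos).ne'
  have hLt : L' ≠ ∞ := ENNReal.ofReal_ne_top
  have hC0 : C ≠ 0 := (ENNReal.ofReal_pos.2 hc1).ne'
  have hCt : C ≠ ∞ := ENNReal.ofReal_ne_top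
  have hCL : C ≤ L' := ENNReal.ofReal_le_ofReal hlam'
  set Φ : E → ℝ≥0∞ := fun i => ENNReal.ofReal (φ i) with hΦ
  have hΦfin : ∀ i, Φ i ≠ ∞ := fun i => ENNReal.ofReal_ne_top
  have hdrE : ∀ i, ∑' j, Qe q i j * Φ j ≤ (C + dq q i) * Φ i :=
    fun i => drift_toENN hq hφ0 hdr i
  have hopPΦ : ∀ i, opP q C Φ i ≤ Φ i := by
    intro i
    refine ENNReal.div_le_of_le_mul ?_
    rw [mul_comm]
    exact hdrE i
  have hEnMono : Monotone En := monotone_nat_of_le_succ hEmono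
  -- main quantitative estimate
  have main : ∀ M : ℝ, 0 < M → v i₀ ≤ Φ i₀ / ENNReal.ofReal M := by
    intro M hM
    obtain ⟨N, hN⟩ := hesc M
    obtain ⟨n₁, hn₁⟩ : ∃ n₁, i₀ ∈ En n₁ := by
      have : i₀ ∈ ⋃ n, En n := hEuniv ▸ Set.mem_univ i₀
      exact Set.mem_iUnion.1 this
    set A : Set E := En (max N n₁) with hA
    have hi₀A : i₀ ∈ A := hEnMono (le_max_right N n₁) hn₁
    have hescA : ∀ j, j ∉ A → M ≤ φ j := fun j hj => hN _ (le_max_left N n₁) j hj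
    obtain ⟨Kr, hKr⟩ := hEbdd (max N n₁)
    set K : ℝ≥0∞ := ENNReal.ofReal Kr with hK
    have hKt : K ≠ ∞ := ENNReal.ofReal_ne_top
    have hKA : ∀ j ∈ A, dq q j ≤ K := fun j hj => ENNReal.ofReal_le_ofReal (hKr j hj)
    set θ : ℝ≥0∞ := K / (L' + K) with hθdef
    have hθ : θ < 1 := by
      rw [hθdef, ENNReal.div_lt_iff (Or.inl (by simp [hL0])) (Or.inl (ENNReal.add_ne_top.2 ⟨hLt, hKt⟩))]
      rw [one_mul, add_comm]
      exact ENNReal.lt_add_right hKt hL0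
    set Mw : ℝ≥0∞ := ENNReal.ofReal M with hMw
    have hMw0 : Mw ≠ 0 := (ENNReal.ofReal_pos.2 hM).ne'
    have hMwt : Mw ≠ ∞ := ENNReal.ofReal_ne_top
    set g : E → ℝ≥0∞ := opP q L' (fun j => if j ∈ A then 0 else v j) with hg
    set ψ : E → ℝ≥0∞ := opP q C (fun j => if j ∈ A then 0 else Φ j) with hψ
    -- the splitting identity  v = TA v + g
    have hsplit : v = TA q L' A v + g := by
      funext i
      have h1 : v i = opP q L' v i := (opP_eq_self hL0 hLt hveq i).symm
      rw [Pi.add_apply, ← opP_split A v i]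
      exact h1
    -- reusable: TA and TC are "additive"
    have hTLadd := fun f g => TA_add (q := q) hL0 hLt A f g
    have hTCadd := fun f g => TA_add (q := q) hC0 hCt A f g
    -- head bound
    have hhead : ∀ k, ∀ i ∈ A, (TA q L' A)^[k] v i ≤ θ ^ k := by
      intro k
      induction k with
      | zero => intro i _; simpa using hv1 i
      | succ k ih =>
        intro i hi
        rw [Function.iterate_succ_apply']
        calc TA q L' A ((TA q L' A)^[k] v) i ≤ θ ^ k * θ :=
              TA_theta hq hL0 hLt hKt hKA (fun j hj => ih j hj) hi
        _ = θ ^ (k+1) := (pow_succ θ k).symm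
    -- bound on g
    have hgle : ∀ i, g i ≤ Mw⁻¹ * ψ i := by
      intro i
      have h1 : ∀ j, (if j ∈ A then 0 else v j) ≤ Mw⁻¹ * (if j ∈ A then 0 else Φ j) := by
        intro j
        by_cases hj : j ∈ A
        · simp [hj]
        · simp only [if_neg hj]
          have hMΦ : Mw ≤ Φ j := ENNReal.ofReal_le_ofReal (hescA j hj)
          calc v j ≤ 1 := hv1 j
          _ = Mw⁻¹ * Mw := (ENNReal.inv_mul_cancel hMw0 hMwt).symm
          _ ≤ Mw⁻¹ * Φ j := mul_le_mul_right hMΦ _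
      calc g i ≤ opP q L' (fun j => Mw⁻¹ * (if j ∈ A then 0 else Φ j)) i := opP_mono h1 i
      _ ≤ opP q C (fun j => Mw⁻¹ * (if j ∈ A then 0 else Φ j)) i := opP_anti hCL _ i
      _ = Mw⁻¹ * ψ i := opP_mul_const _ _ i
    -- ψ is dominated by the telescoping difference
    have hTCΦ1 : ∀ i, TA q C A Φ i ≤ Φ i :=
      fun i => (TA_le_self hq Φ i).trans (hopPΦ i)
    have hTCiter_le : ∀ m i, (TA q C A)^[m] Φ i ≤ Φ i := by
      intro m
      induction m with
      | zero => intro i; simp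
      | succ m ih =>
        intro i
        rw [Function.iterate_succ_apply]
        calc (TA q C A)^[m] (TA q C A Φ) i ≤ (TA q C A)^[m] Φ i :=
              iter_mono2 (fun f g h i => TA_cmp le_rfl h i) m _ _ hTCΦ1 i
        _ ≤ Φ i := ih i
    have hψle : ∀ i, ψ i ≤ Φ i - TA q C A Φ i := by
      intro i
      have h1 : TA q C A Φ i + ψ i = opP q C Φ i := (opP_split A Φ i).symm
      refine ENNReal.le_sub_of_add_le_left (ne_top_of_le_ne_top (hΦfin i) (hTCΦ1 i)) ?_
      rw [h1]
      exact hopPΦ i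
    -- partial sums of the exit terms
    have hsum_le : ∀ k, (∑ m ∈ Finset.range k, (TA q C A)^[m] ψ i₀) ≤ Φ i₀ := by
      intro k
      have hterm : ∀ m, (TA q C A)^[m] ψ i₀
          ≤ (TA q C A)^[m] Φ i₀ - (TA q C A)^[m+1] Φ i₀ := by
        intro m
        calc (TA q C A)^[m] ψ i₀ ≤ (TA q C A)^[m] (Φ - TA q C A Φ) i₀ :=
              iter_mono2 (fun f g h i => TA_cmp le_rfl h i) m _ _ hψle i₀
        _ ≤ (TA q C A)^[m] Φ i₀ - (TA q C A)^[m] (TA q C A Φ) i₀ := by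
              refine iter_tsub hTCadd m hTCΦ1 i₀ ?_
              refine ne_top_of_le_ne_top (hΦfin i₀) ?_
              calc (TA q C A)^[m] (TA q C A Φ) i₀ = (TA q C A)^[m+1] Φ i₀ := by
                    rw [Function.iterate_succ_apply]
              _ ≤ Φ i₀ := hTCiter_le (m+1) i₀
        _ = (TA q C A)^[m] Φ i₀ - (TA q C A)^[m+1] Φ i₀ := by
              rw [Function.iterate_succ_apply]
      calc (∑ m ∈ Finset.range k, (TA q C A)^[m] ψ i₀)
          ≤ ∑ m ∈ Finset.range k,
            ((TA q C A)^[m] Φ i₀ - (TA q C A)^[m+1] Φ i₀) :=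
            Finset.sum_le_sum fun m _ => hterm m
      _ ≤ (TA q C A)^[0] Φ i₀ := by
            refine tele_le (fun m => (TA q C A)^[m] Φ i₀) (fun m => ?_) k
            show (TA q C A)^[m+1] Φ i₀ ≤ (TA q C A)^[m] Φ i₀
            rw [Function.iterate_succ_apply]
            exact iter_mono2 (fun f g h i => TA_cmp le_rfl h i) m _ _ hTCΦ1 i₀
      _ = Φ i₀ := by simp
    -- the exit sums for TL
    have hTLsum : ∀ k, (∑ m ∈ Finset.range k, (TA q L' A)^[m] g i₀) ≤ Mw⁻¹ * Φ i₀ := by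
      intro k
      have hterm : ∀ m, (TA q L' A)^[m] g i₀ ≤ Mw⁻¹ * (TA q C A)^[m] ψ i₀ := by
        intro m
        have h1 : (TA q L' A)^[m] g i₀ ≤ (TA q C A)^[m] (fun j => Mw⁻¹ * ψ j) i₀ :=
          iter_mono2 (fun f g h i => TA_cmp hCL h i) m _ _ hgle i₀
        have h2 : (TA q C A)^[m] (fun j => Mw⁻¹ * ψ j) i₀ = Mw⁻¹ * (TA q C A)^[m] ψ i₀ := by
          rw [iter_mul_const (fun t f => TA_mul_const t f) m Mw⁻¹ ψ]
        rw [← h2]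
        exact h1
      calc (∑ m ∈ Finset.range k, (TA q L' A)^[m] g i₀)
          ≤ ∑ m ∈ Finset.range k, Mw⁻¹ * (TA q C A)^[m] ψ i₀ :=
            Finset.sum_le_sum fun m _ => hterm m
      _ = Mw⁻¹ * ∑ m ∈ Finset.range k, (TA q C A)^[m] ψ i₀ := by rw [Finset.mul_sum]
      _ ≤ Mw⁻¹ * Φ i₀ := mul_le_mul_right (hsum_le k) _
    -- combine
    have hcomb : ∀ k, v i₀ ≤ θ ^ k + Mw⁻¹ * Φ i₀ := by
      intro k
      have hrep := iter_repr hTLadd hsplit k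
      have := congrFun hrep i₀
      rw [Pi.add_apply, Finset.sum_apply] at this
      calc v i₀ = (TA q L' A)^[k] v i₀ + ∑ m ∈ Finset.range k, (TA q L' A)^[m] g i₀ := this
      _ ≤ θ ^ k + Mw⁻¹ * Φ i₀ := add_le_add (hhead k i₀ hi₀A) (hTLsum k)
    have hlim : Tendsto (fun k : ℕ => θ ^ k + Mw⁻¹ * Φ i₀) atTop (𝓝 (0 + Mw⁻¹ * Φ i₀)) := by
      exact (ENNReal.tendsto_pow_atTop_nhds_zero_of_lt_one hθ).add tendsto_const_nhds
    have := ge_of_tendsto' hlim (fun k => hcomb k)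
    rw [zero_add] at this
    calc v i₀ ≤ Mw⁻¹ * Φ i₀ := this
    _ = Φ i₀ / Mw := by rw [div_eq_mul_inv, mul_comm]
  -- archimedean conclusion
  by_contra hne
  have hvpos : 0 < v i₀ := pos_iff_ne_zero.2 hne
  have hvfin : v i₀ ≠ ∞ := ne_top_of_le_ne_top one_ne_top (hv1 i₀)
  have hΦfin : ENNReal.ofReal (φ i₀) ≠ ∞ := ENNReal.ofReal_ne_top
  obtain ⟨n, hn⟩ := ENNReal.exists_nat_gt (ENNReal.div_lt_top hΦfin hne).ne
  have h1 : v i₀ ≤ ENNReal.ofReal (φ i₀) / ENNReal.ofReal ((n:ℝ) + 1) :=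
    main ((n:ℝ) + 1) (by positivity)
  have h2 : ENNReal.ofReal (φ i₀) < (n:ℝ≥0∞) * v i₀ := by
    rw [ENNReal.div_lt_iff (Or.inl hne) (Or.inl hvfin)] at hn
    exact hn
  have h3 : ENNReal.ofReal ((n:ℝ) + 1) * v i₀ ≤ ENNReal.ofReal (φ i₀) := by
    rw [mul_comm]
    exact (ENNReal.le_div_iff_mul_le (Or.inl (by positivity : (0:ℝ≥0∞) < ENNReal.ofReal ((n:ℝ)+1)).ne') (Or.inl ENNReal.ofReal_ne_top)).1 h1
  have h4 : (n:ℝ≥0∞) * v i₀ ≤ ENNReal.ofReal ((n:ℝ) + 1) * v i₀ := by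
    refine mul_le_mul_left ?_ _
    rw [ENNReal.ofReal_add (by positivity) zero_le_one]
    simp
  exact absurd ((h2.trans_le h4).trans_le h3) (lt_irrefl _)

end step1

section step2

variable {q : E → E → ℝ}

lemma reverse_main (hq : IsQMatrix q) {En : ℕ → Set E} {φ : E → ℝ} {c : ℝ}
    (hEmono : ∀ n, En n ⊆ En (n + 1)) (hEuniv : (⋃ n, En n) = Set.univ)
    (hEbdd : ∀ n, ∃ M : ℝ, ∀ i ∈ En n, -q i i ≤ M)
    (hφ0 : ∀ i, 0 ≤ φ i) (hesc : ∀ M : ℝ, ∃ N : ℕ, ∀ n ≥ N, ∀ i ∉ En n, M ≤ φ i)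
    (hdr : DriftLE q φ c) :
    ∀ lam : ℝ, 0 < lam → ∀ u : E → ℝ, IsLamSolution q lam u → u = 0 := by
  intro lam hlam u hsol
  have hc1 : (0:ℝ) < max c 0 + 1 := by positivity
  set lam' : ℝ := max c 0 + 1 + lam with hlam'def
  have hlam'big : max c 0 + 1 ≤ lam' := by linarith
  have hlampos' : (0:ℝ) < lam' := by linarith
  set L : ℝ≥0∞ := ENNReal.ofReal lam with hL
  set L' : ℝ≥0∞ := ENNReal.ofReal lam' with hL'
  set C : ℝ≥0∞ := ENNReal.ofReal (max c 0 + 1) with hCdef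
  have hLCL : L' = C + L := by
    rw [hL', hCdef, hL, ← ENNReal.ofReal_add hc1.le hlam.le]
  have hL0 : L ≠ 0 := (ENNReal.ofReal_pos.2 hlam).ne'
  have hL'0 : L' ≠ 0 := (ENNReal.ofReal_pos.2 hlampos').ne'
  have hL't : L' ≠ ∞ := ENNReal.ofReal_ne_top
  have hC0 : C ≠ 0 := (ENNReal.ofReal_pos.2 hc1).ne'
  have hCt : C ≠ ∞ := ENNReal.ofReal_ne_top
  have hLL' : L ≤ L' := ENNReal.ofReal_le_ofReal (by linarith)
  set U : E → ℝ≥0∞ := fun i => ENNReal.ofReal (u i) with hU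
  have hU1 : ∀ i, U i ≤ 1 := fun i => ENNReal.ofReal_le_one.2 (hsol.1 i).2
  have hUeq : ∀ i, ∑' j, Qe q i j * U j = (L + dq q i) * U i :=
    fun i => sol_toENN hq hlam hsol i
  -- iterate the resolvent kernel at rate lam'
  set P : (E → ℝ≥0∞) → E → ℝ≥0∞ := opP q L' with hP
  have hv1 : ∀ k i, P^[k] U i ≤ 1 := by
    intro k
    induction k with
    | zero => exact hU1
    | succ k ih =>
      intro i
      rw [Function.iterate_succ_apply']
      exact opP_le_one hq hL'0 ih i
  have hPUval : ∀ i, P U i = ((L + dq q i) * U i) / (L' + dq q i) := by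
    intro i
    rw [hP]
    unfold opP
    rw [hUeq i]
  have hPU : ∀ i, P U i ≤ U i := by
    intro i
    rw [hPUval i]
    refine ENNReal.div_le_of_le_mul ?_
    rw [mul_comm (U i)]
    exact mul_le_mul_left (add_le_add_left hLL' _) _
  have hvanti : ∀ k i, P^[k+1] U i ≤ P^[k] U i := by
    intro k
    rw [Function.iterate_succ_apply]
    exact iter_mono2 (fun f g h i => opP_mono h i) k _ _ hPU
  set w : E → ℝ≥0∞ := fun i => ⨅ k, P^[k] U i with hw
  have hw1 : ∀ i, w i ≤ 1 := fun i => (iInf_le _ 0).trans (hv1 0 i)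
  have hweq : ∀ i, ∑' j, Qe q i j * w j = (L' + dq q i) * w i := by
    intro i
    have hmul : ∀ j, Qe q i j * w j = ⨅ k, Qe q i j * P^[k] U j :=
      fun j => ENNReal.mul_iInf (fun h => absurd h Qe_ne_top)
    have hanti : ∀ j, Antitone fun k => Qe q i j * P^[k] U j := by
      intro j
      refine antitone_nat_of_succ_le fun k => ?_
      exact mul_le_mul_right (hvanti k j) _
    have hGfin : ∑' j, Qe q i j ≠ ∞ := by rw [Qsum hq i]; exact dq_ne_top
    have hdom : ∀ (k : ℕ) j, Qe q i j * P^[k] U j ≤ Qe q i j :=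
      fun k j => by simpa using mul_le_mul_right (hv1 k j) (Qe q i j)
    calc ∑' j, Qe q i j * w j = ∑' j, ⨅ k, Qe q i j * P^[k] U j := by simp only [hmul]
    _ = ⨅ k, ∑' j, Qe q i j * P^[k] U j := tsum_iInf_anti hanti hdom hGfin
    _ = ⨅ k, (L' + dq q i) * P^[k+1] U i := by
        refine iInf_congr fun k => ?_
        rw [Function.iterate_succ_apply', hP, mul_opP hL'0 hL't]
    _ = (L' + dq q i) * ⨅ k, P^[k+1] U i := by
        refine (ENNReal.mul_iInf ?_).symm
        exact fun h => absurd h (denom_ne_top hL't i)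
    _ = (L' + dq q i) * w i := by
        rw [iInf_succ _ (fun k => hvanti k i)]
  have hw0 : ∀ i, w i = 0 :=
    step1 hq hEmono hEuniv hEbdd hφ0 hesc hdr hlam'big hw1 hweq
  -- telescoping representation
  set S : ℝ≥0∞ := ⨆ i, U i with hS
  have hS1 : S ≤ 1 := iSup_le hU1
  have hSfin : S ≠ ∞ := ne_top_of_le_ne_top one_ne_top hS1
  set g : E → ℝ≥0∞ := fun i => U i - P U i with hgdef
  have hsplit : U = P U + g := by
    funext i
    rw [Pi.add_apply, hgdef, add_comm, tsub_add_cancel_of_le (hPU i)]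
  have hUexact : ∀ i, U i = P U i + C * U i / (L' + dq q i) := by
    intro i
    rw [hPUval i, ENNReal.div_add_div_same]
    have h1 : (L + dq q i) * U i + C * U i = (L' + dq q i) * U i := by
      rw [← add_mul]
      congr 1
      rw [hLCL]
      ring
    rw [h1, mul_comm, mul_div_assoc,
      ENNReal.div_self (denom_ne_zero hL'0 i) (denom_ne_top hL't i), mul_one]
  have hgle : ∀ i, g i ≤ (C * S * L'⁻¹) * (L' / (L' + dq q i)) := by
    intro i
    have h1 : g i ≤ C * U i / (L' + dq q i) := by
      rw [hgdef]
      rw [tsub_le_iff_right, add_comm]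
      exact (hUexact i).le
    have h2 : C * U i / (L' + dq q i) ≤ C * S / (L' + dq q i) :=
      ENNReal.div_le_div_right (mul_le_mul_right (le_iSup _ i) C) _
    have h3 : (C * S * L'⁻¹) * (L' / (L' + dq q i)) = C * S / (L' + dq q i) := by
      have : (C * S * L'⁻¹) * (L' / (L' + dq q i))
          = C * S * (L'⁻¹ * L') * (L' + dq q i)⁻¹ := by
        rw [div_eq_mul_inv]
        ring
      rw [this, ENNReal.inv_mul_cancel hL'0 hL't, mul_one, div_eq_mul_inv]
    rw [h3]
    exact h1.trans h2
  -- ∑_{m<k} P^[m] (L'/(L'+dq)) ≤ 1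
  set ρ : E → ℝ≥0∞ := fun i => L' / (L' + dq q i) with hρdef
  have hP1val : ∀ i, P (fun _ => 1) i = dq q i / (L' + dq q i) := by
    intro i
    rw [hP]
    unfold opP
    congr 1
    simpa using Qsum hq i
  have hP1le : ∀ i, P (fun _ => 1) i ≤ 1 := fun i =>
    opP_le_one hq hL'0 (fun _ => le_rfl) i
  have hρeq : ρ = (fun _ => (1:ℝ≥0∞)) - P (fun _ => 1) := by
    funext i
    rw [Pi.sub_apply]
    refine ENNReal.eq_sub_of_add_eq (ne_top_of_le_ne_top one_ne_top (hP1le i)) ?_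
    rw [hP1val i, hρdef, ENNReal.div_add_div_same,
      ENNReal.div_self (denom_ne_zero hL'0 i) (denom_ne_top hL't i)]
  have he_anti : ∀ m i, P^[m+1] (fun _ => (1:ℝ≥0∞)) i ≤ P^[m] (fun _ => (1:ℝ≥0∞)) i := by
    intro m
    rw [Function.iterate_succ_apply]
    exact iter_mono2 (fun f g h i => opP_mono h i) m _ _ hP1le
  have he_le1 : ∀ m i, P^[m] (fun _ => (1:ℝ≥0∞)) i ≤ 1 := by
    intro m
    induction m with
    | zero => intro i; exact le_rfl
    | succ m ih =>
      intro i
      rw [Function.iterate_succ_apply']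
      exact opP_le_one hq hL'0 ih i
  have hPadd : ∀ f g : E → ℝ≥0∞, P (f + g) = P f + P g := fun f g => opP_add hL'0 hL't f g
  have hsumρ : ∀ (k : ℕ) (i : E), (∑ m ∈ Finset.range k, P^[m] ρ i) ≤ 1 := by
    intro k i
    have hterm : ∀ m, P^[m] ρ i
        ≤ P^[m] (fun _ => (1:ℝ≥0∞)) i - P^[m+1] (fun _ => (1:ℝ≥0∞)) i := by
      intro m
      rw [hρeq]
      calc P^[m] ((fun _ => (1:ℝ≥0∞)) - P (fun _ => 1)) i
          ≤ P^[m] (fun _ => (1:ℝ≥0∞)) i - P^[m] (P (fun _ => 1)) i := by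
            refine iter_tsub hPadd m hP1le i ?_
            refine ne_top_of_le_ne_top one_ne_top ?_
            calc P^[m] (P (fun _ => (1:ℝ≥0∞))) i = P^[m+1] (fun _ => (1:ℝ≥0∞)) i := by
                  rw [Function.iterate_succ_apply]
            _ ≤ 1 := he_le1 (m+1) i
      _ = P^[m] (fun _ => (1:ℝ≥0∞)) i - P^[m+1] (fun _ => (1:ℝ≥0∞)) i := by
            rw [Function.iterate_succ_apply]
    calc (∑ m ∈ Finset.range k, P^[m] ρ i)
        ≤ ∑ m ∈ Finset.range k,
          (P^[m] (fun _ => (1:ℝ≥0∞)) i - P^[m+1] (fun _ => (1:ℝ≥0∞)) i) :=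
          Finset.sum_le_sum fun m _ => hterm m
    _ ≤ P^[0] (fun _ => (1:ℝ≥0∞)) i := by
          refine tele_le (fun m => P^[m] (fun _ => (1:ℝ≥0∞)) i) (fun m => ?_) k
          show P^[m+1] (fun _ => (1:ℝ≥0∞)) i ≤ P^[m] (fun _ => (1:ℝ≥0∞)) i
          exact he_anti m i
    _ = 1 := rfl
  -- combine
  have hrepr := iter_repr hPadd hsplit
  have hUle : ∀ i, U i ≤ C * L'⁻¹ * S := by
    intro i
    have hcomb : ∀ k, U i ≤ P^[k] U i + C * S * L'⁻¹ := by
      intro k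
      have h0 := congrFun (hrepr k) i
      rw [Pi.add_apply, Finset.sum_apply] at h0
      have hsumg : (∑ m ∈ Finset.range k, P^[m] g i) ≤ C * S * L'⁻¹ := by
        have hterm : ∀ m, P^[m] g i ≤ (C * S * L'⁻¹) * P^[m] ρ i := by
          intro m
          calc P^[m] g i ≤ P^[m] (fun j => (C * S * L'⁻¹) * ρ j) i :=
                iter_mono2 (fun f g h i => opP_mono h i) m _ _ hgle i
          _ = (C * S * L'⁻¹) * P^[m] ρ i := by
              rw [iter_mul_const (fun t f => funext fun i => opP_mul_const t f i) m _ ρ]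
        calc (∑ m ∈ Finset.range k, P^[m] g i)
            ≤ ∑ m ∈ Finset.range k, (C * S * L'⁻¹) * P^[m] ρ i :=
              Finset.sum_le_sum fun m _ => hterm m
        _ = (C * S * L'⁻¹) * ∑ m ∈ Finset.range k, P^[m] ρ i := by rw [Finset.mul_sum]
        _ ≤ (C * S * L'⁻¹) * 1 := mul_le_mul_right (hsumρ k i) _
        _ = C * S * L'⁻¹ := mul_one _
      calc U i = P^[k] U i + ∑ m ∈ Finset.range k, P^[m] g i := h0
      _ ≤ P^[k] U i + C * S * L'⁻¹ := add_le_add_right hsumg _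
    have h1 : U i ≤ (⨅ k, P^[k] U i) + C * S * L'⁻¹ := by
      rw [ENNReal.iInf_add]
      exact le_iInf fun k => hcomb k
    have h2 : (⨅ k, P^[k] U i) = 0 := hw0 i
    rw [h2, zero_add] at h1
    calc U i ≤ C * S * L'⁻¹ := h1
    _ = C * L'⁻¹ * S := by ring
  have hβ : C * L'⁻¹ < 1 := by
    rw [← div_eq_mul_inv, ENNReal.div_lt_iff (Or.inl hL'0) (Or.inl hL't), one_mul]
    rw [hCdef, hL']
    exact (ENNReal.ofReal_lt_ofReal_iff hlampos').2 (by linarith)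
  have hS0 : S = 0 := by
    by_contra hS0
    have h1 : S ≤ C * L'⁻¹ * S := iSup_le hUle
    have h2 : C * L'⁻¹ * S < 1 * S :=
      (ENNReal.mul_lt_mul_iff_left hS0 hSfin).2 hβ
    rw [one_mul] at h2
    exact absurd (h1.trans_lt h2) (lt_irrefl _)
  funext i
  have hU0 : U i = 0 := le_antisymm ((le_iSup U i).trans hS0.le) (by simp)
  have := ENNReal.ofReal_eq_zero.1 hU0
  have h0 := (hsol.1 i).1
  simp only [Pi.zero_apply]
  linarith

end step2

end QProcAux

/-- Uniqueness criterion (Theorem 2, via criterion (C3)): the `Q`-process is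
unique (i.e. for every `λ > 0` the only `λ`-solution is `0`) iff conditions
(U1) and (U2) hold simultaneously. -/
theorem uniqueness_criterion {E : Type*} [Countable E] (q : E → E → ℝ)
    (hq : IsQMatrix q) :
    (∀ lam : ℝ, 0 < lam → ∀ u : E → ℝ, IsLamSolution q lam u → u = 0) ↔
      ∃ (En : ℕ → Set E) (φ : E → ℝ),
        -- (U1)
        (∀ n, En n ⊆ En (n + 1)) ∧
        (⋃ n, En n) = Set.univ ∧
        (∀ n, ∃ M : ℝ, ∀ i ∈ En n, -q i i ≤ M) ∧
        (∀ i, 0 ≤ φ i) ∧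
        (∀ M : ℝ, ∃ N : ℕ, ∀ n ≥ N, ∀ i ∉ En n, M ≤ φ i) ∧
        -- (U2)
        (∃ c : ℝ, DriftLE q φ c) := by
  constructor
  · intro hu
    exact QProcAux.forward_main hq hu
  · rintro ⟨En, φ, h1, h2, h3, h4, h5, c, h6⟩
    exact QProcAux.reverse_main hq h1 h2 h3 h4 h5 h6
end

section
/- Theorem 5 (uniqueness criterion with finite exhausting sets, via criterion (C3)): Let q be a totally stable, conservative Q-matrix on a countable set E. Then for every λ > 0 the only λ-solution is u = 0 (equivalently, the Q-process is unique) if and only if the following two conditions hold simultaneously: (U1)′ there exist FINITE subsets E_n ⊆ E with E_n ⊆ E_{n+1} and ⋃_n E_n = E, together with a nonnegative function φ : E → [0,∞) such that lim_{n→∞} inf_{i ∉ E_n} φ(i) = ∞ (with the convention inf_∅ = ∞); and (U2) there exists a constant c ∈ ℝ such that Qφ ≤ cφ. -/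
open scoped BigOperators Classical

/-- The drift condition `Qφ ≥ cφ`: for every `i`, the series
`∑_{j ≠ i} q(i,j) φ(j)` converges and
`∑_{j ≠ i} q(i,j) φ(j) - q_i φ(i) ≥ c φ(i)`. -/
def DriftGE {E : Type*} (q : E → E → ℝ) (φ : E → ℝ) (c : ℝ) : Prop :=
  ∀ i, Summable (fun j => if j = i then 0 else q i j * φ j) ∧
    c * φ i ≤ (∑' j, if j = i then 0 else q i j * φ j) - (-q i i) * φ i

namespace QTools
open Filter
variable {E : Type*} {q : E → E → ℝ}

lemma term_nonneg (hq : IsQMatrix q) (i j : E) : 0 ≤ if j = i then 0 else q i j := by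
  split
  · exact le_rfl
  · next h => exact hq.1 i j (fun hh => h hh.symm)

lemma qi_nonneg (hq : IsQMatrix q) (i : E) : 0 ≤ -q i i := neg_nonneg.2 (hq.2.1 i)

lemma summable_row (hq : IsQMatrix q) (i : E) :
    Summable (fun j => if j = i then 0 else q i j) := (hq.2.2 i).summable

lemma multerm_nonneg (hq : IsQMatrix q) (i : E) {x : E → ℝ} (h0 : ∀ j, 0 ≤ x j) (j : E) :
    0 ≤ if j = i then 0 else q i j * x j := by
  split
  · exact le_rfl
  · next h => exact mul_nonneg (hq.1 i j (fun hh => h hh.symm)) (h0 j)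

lemma summable_mul (hq : IsQMatrix q) (i : E) {x : E → ℝ} {B : ℝ}
    (h0 : ∀ j, 0 ≤ x j) (h1 : ∀ j, x j ≤ B) :
    Summable (fun j => if j = i then 0 else q i j * x j) := by
  refine Summable.of_nonneg_of_le
    (multerm_nonneg hq i h0) ?_ ((summable_row hq i).mul_left B)
  · intro j
    by_cases hji : j = i
    · simp [hji]
    · simp only [hji, if_false]
      rw [mul_comm]
      exact mul_le_mul_of_nonneg_right (h1 j) (by simpa [hji] using term_nonneg hq i j)

lemma tsum_mul_le (hq : IsQMatrix q) (i : E) {x : E → ℝ} {B : ℝ}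
    (h0 : ∀ j, 0 ≤ x j) (h1 : ∀ j, x j ≤ B) (hB : 0 ≤ B) :
    ∑' j, (if j = i then 0 else q i j * x j) ≤ B * (-q i i) := by
  have h := Summable.tsum_le_tsum (f := fun j => if j = i then 0 else q i j * x j)
    (g := fun j => B * (if j = i then 0 else q i j)) ?_ (summable_mul hq i h0 h1)
    ((summable_row hq i).mul_left B)
  · calc _ ≤ ∑' j, B * (if j = i then 0 else q i j) := h
      _ = B * ∑' j, (if j = i then 0 else q i j) := by rw [tsum_mul_left]
      _ = B * (-q i i) := by rw [(hq.2.2 i).tsum_eq]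
  · intro j
    by_cases hji : j = i
    · simp [hji]
    · simp only [hji, if_false]
      rw [mul_comm]
      exact mul_le_mul_of_nonneg_right (h1 j) (by simpa [hji] using term_nonneg hq i j)

/-! ### minimal exit machinery -/

def InBox (x : E → ℝ) : Prop := ∀ j, 0 ≤ x j ∧ x j ≤ 1

noncomputable def Tmap (q : E → E → ℝ) (F : Finset E) (x : E → ℝ) : E → ℝ :=
  fun i => if i ∈ F then (∑' j, if j = i then 0 else q i j * x j) / (1 + -q i i) else 1

lemma denom_pos (hq : IsQMatrix q) (i : E) : 0 < 1 + -q i i := by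
  linarith [qi_nonneg hq i]

lemma Tmap_box (hq : IsQMatrix q) (F : Finset E) {x : E → ℝ} (hx : InBox x) :
    InBox (Tmap q F x) := by
  intro i
  unfold Tmap
  split
  · refine ⟨div_nonneg (tsum_nonneg (multerm_nonneg hq i (fun j => (hx j).1)))
      (denom_pos hq i).le, ?_⟩
    rw [div_le_one (denom_pos hq i)]
    calc ∑' j, (if j = i then 0 else q i j * x j) ≤ 1 * (-q i i) :=
          tsum_mul_le hq i (fun j => (hx j).1) (fun j => (hx j).2) zero_le_one
      _ ≤ 1 + -q i i := by linarith
  · exact ⟨zero_le_one, le_rfl⟩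

lemma Tmap_mono (hq : IsQMatrix q) {F G : Finset E} (hFG : F ⊆ G) {x y : E → ℝ}
    (hx : InBox x) (hy : InBox y) (hxy : ∀ j, x j ≤ y j) (i : E) :
    Tmap q G x i ≤ Tmap q F y i := by
  by_cases hiF : i ∈ F
  · have hts : (∑' j, if j = i then 0 else q i j * x j)
        ≤ (∑' j, if j = i then 0 else q i j * y j) := by
      apply Summable.tsum_le_tsum _ (summable_mul hq i (fun j => (hx j).1) (fun j => (hx j).2))
        (summable_mul hq i (fun j => (hy j).1) (fun j => (hy j).2))
      intro j
      by_cases hji : j = i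
      · simp [hji]
      · simp only [hji, if_false]
        exact mul_le_mul_of_nonneg_left (hxy j) (hq.1 i j (fun hh => hji hh.symm))
    simp only [Tmap, if_pos hiF, if_pos (hFG hiF)]
    exact div_le_div_of_nonneg_right hts (denom_pos hq i).le
  · calc Tmap q G x i ≤ 1 := (Tmap_box hq G hx i).2
      _ = Tmap q F y i := by simp [Tmap, hiF]


noncomputable def xit (q : E → E → ℝ) (F : Finset E) : ℕ → E → ℝ :=
  fun n => (Tmap q F)^[n] (fun _ => 1)

lemma xit_zero (F : Finset E) : xit q F 0 = fun _ => (1:ℝ) := rfl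

lemma xit_succ (F : Finset E) (n : ℕ) : xit q F (n+1) = Tmap q F (xit q F n) := by
  unfold xit
  rw [Function.iterate_succ']
  rfl

lemma xit_box (hq : IsQMatrix q) (F : Finset E) : ∀ n, InBox (xit q F n) := by
  intro n
  induction n with
  | zero => exact fun j => ⟨zero_le_one, le_rfl⟩
  | succ n ih => rw [xit_succ]; exact Tmap_box hq F ih

lemma xit_succ_le (hq : IsQMatrix q) (F : Finset E) :
    ∀ n j, xit q F (n+1) j ≤ xit q F n j := by
  intro n
  induction n with
  | zero =>
    intro j
    rw [xit_succ, xit_zero]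
    exact (Tmap_box hq F (fun j => ⟨zero_le_one, le_rfl⟩) j).2
  | succ n ih =>
    intro j
    calc xit q F (n+1+1) j = Tmap q F (xit q F (n+1)) j := by rw [xit_succ]
      _ ≤ Tmap q F (xit q F n) j :=
          Tmap_mono hq (subset_refl F) (xit_box hq F (n+1)) (xit_box hq F n) ih j
      _ = xit q F (n+1) j := by rw [xit_succ]

lemma xit_antitone (hq : IsQMatrix q) (F : Finset E) (j : E) :
    Antitone (fun n => xit q F n j) :=
  antitone_nat_of_succ_le (fun n => xit_succ_le hq F n j)

lemma xit_cross (hq : IsQMatrix q) {F G : Finset E} (hFG : F ⊆ G) :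
    ∀ n j, xit q G n j ≤ xit q F n j := by
  intro n
  induction n with
  | zero => exact fun j => le_rfl
  | succ n ih =>
    intro j
    rw [xit_succ, xit_succ]
    exact Tmap_mono hq hFG (xit_box hq G n) (xit_box hq F n) ih j

noncomputable def Xf (q : E → E → ℝ) (F : Finset E) : E → ℝ :=
  fun i => ⨅ n, xit q F n i

lemma xit_bddBelow (hq : IsQMatrix q) (F : Finset E) (i : E) :
    BddBelow (Set.range fun n => xit q F n i) := by
  refine ⟨0, ?_⟩
  rintro _ ⟨n, rfl⟩
  exact (xit_box hq F n i).1

lemma Xf_box (hq : IsQMatrix q) (F : Finset E) : InBox (Xf q F) := by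
  intro i
  constructor
  · exact le_ciInf (fun n => (xit_box hq F n i).1)
  · exact (ciInf_le (xit_bddBelow hq F i) 0).trans_eq (by rw [xit_zero])

lemma Xf_tendsto (hq : IsQMatrix q) (F : Finset E) (i : E) :
    Tendsto (fun n => xit q F n i) atTop (nhds (Xf q F i)) :=
  tendsto_atTop_ciInf (xit_antitone hq F i) (xit_bddBelow hq F i)

lemma Xf_off (F : Finset E) {i : E} (hi : i ∉ F) : Xf q F i = 1 := by
  have h : ∀ n, xit q F n i = 1 := by
    intro n
    cases n with
    | zero => rfl
    | succ n => rw [xit_succ]; simp [Tmap, hi]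
  unfold Xf
  simp only [h]
  exact ciInf_const

lemma Xf_mono (hq : IsQMatrix q) {F G : Finset E} (hFG : F ⊆ G) (i : E) :
    Xf q G i ≤ Xf q F i :=
  ciInf_mono (xit_bddBelow hq G i) (fun n => xit_cross hq hFG n i)

lemma Xf_fixed (hq : IsQMatrix q) (F : Finset E) {i : E} (hi : i ∈ F) :
    (1 + -q i i) * Xf q F i = ∑' j, (if j = i then 0 else q i j * Xf q F j) := by
  have hdom : Tendsto (fun n => ∑' j, (if j = i then 0 else q i j * xit q F n j)) atTop
      (nhds (∑' j, (if j = i then 0 else q i j * Xf q F j))) := by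
    apply tendsto_tsum_of_dominated_convergence
      (bound := fun j => if j = i then 0 else q i j) (summable_row hq i)
    · intro j
      by_cases hji : j = i
      · simp only [hji, if_pos rfl]; exact tendsto_const_nhds
      · simp only [hji, if_false]
        exact (Xf_tendsto hq F j).const_mul _
    · filter_upwards with n j
      by_cases hji : j = i
      · simp [hji]
      · simp only [hji, if_false]
        rw [Real.norm_eq_abs, abs_of_nonneg
          (mul_nonneg (hq.1 i j (fun hh => hji hh.symm)) (xit_box hq F n j).1)]
        calc q i j * xit q F n j ≤ q i j * 1 :=
              mul_le_mul_of_nonneg_left (xit_box hq F n j).2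
                (hq.1 i j (fun hh => hji hh.symm))
          _ = q i j := mul_one _
  have h1 : Tendsto (fun n => xit q F (n+1) i) atTop (nhds (Xf q F i)) :=
    (Xf_tendsto hq F i).comp (tendsto_add_atTop_nat 1)
  have h2 : (fun n => xit q F (n+1) i)
      = fun n => (∑' j, (if j = i then 0 else q i j * xit q F n j)) / (1 + -q i i) := by
    funext n
    rw [xit_succ]
    simp [Tmap, hi]
  rw [h2] at h1
  have h3 := hdom.div_const (1 + -q i i)
  have h4 := tendsto_nhds_unique h1 h3
  rw [h4]
  rw [mul_div_assoc', mul_div_cancel_left₀ _ (ne_of_gt (denom_pos hq i))]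

lemma Xf_drift (hq : IsQMatrix q) (F : Finset E) (i : E) :
    ∑' j, (if j = i then 0 else q i j * Xf q F j) ≤ (1 + -q i i) * Xf q F i := by
  by_cases hi : i ∈ F
  · exact (Xf_fixed hq F hi).ge
  · rw [Xf_off F hi, mul_one]
    calc ∑' j, (if j = i then 0 else q i j * Xf q F j) ≤ 1 * (-q i i) :=
          tsum_mul_le hq i (fun j => (Xf_box hq F j).1) (fun j => (Xf_box hq F j).2)
            zero_le_one
      _ ≤ 1 + -q i i := by linarith


lemma pow_convex_ineq (m : ℕ) {x y : ℝ} (hx : 0 ≤ x) (hy : 0 ≤ y) :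
    y ^ (m+1) + ((m:ℝ)+1) * y ^ m * (x - y) ≤ x ^ (m+1) := by
  have key : (((m:ℝ)+1) * y ^ m) * (x - y) ≤
      (∑ i ∈ Finset.range (m+1), x ^ i * y ^ (m - i)) * (x - y) := by
    rcases le_total y x with hxy | hxy
    · apply mul_le_mul_of_nonneg_right _ (by linarith)
      calc ((m:ℝ)+1) * y ^ m = ∑ _i ∈ Finset.range (m+1), y ^ m := by
            rw [Finset.sum_const, Finset.card_range]; ring
        _ ≤ ∑ i ∈ Finset.range (m+1), x ^ i * y ^ (m - i) := by
            apply Finset.sum_le_sum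
            intro i hi
            have hi' : i ≤ m := Nat.lt_succ_iff.mp (Finset.mem_range.mp hi)
            have : y ^ m = y ^ i * y ^ (m - i) := by
              rw [← pow_add]; congr 1; omega
            rw [this]
            exact mul_le_mul_of_nonneg_right (pow_le_pow_left₀ hy hxy i)
              (pow_nonneg hy _)
    · rw [← neg_le_neg_iff, ← mul_neg, ← mul_neg]
      apply mul_le_mul_of_nonneg_right _ (by linarith)
      calc (∑ i ∈ Finset.range (m+1), x ^ i * y ^ (m - i))
          ≤ ∑ _i ∈ Finset.range (m+1), y ^ m := by
            apply Finset.sum_le_sum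
            intro i hi
            have hi' : i ≤ m := Nat.lt_succ_iff.mp (Finset.mem_range.mp hi)
            have : y ^ m = y ^ i * y ^ (m - i) := by
              rw [← pow_add]; congr 1; omega
            rw [this]
            exact mul_le_mul_of_nonneg_right (pow_le_pow_left₀ hx hxy i)
              (pow_nonneg hy _)
        _ = ((m:ℝ)+1) * y ^ m := by
            rw [Finset.sum_const, Finset.card_range]; ring
  have geo := geom_sum₂_mul x y (m+1)
  have hmm : m + 1 - 1 = m := by omega
  simp only [hmm] at geo
  nlinarith [key, geo]

theorem sufficiency {E : Type*} (q : E → E → ℝ) (hq : IsQMatrix q)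
    (En : ℕ → Set E) (φ : E → ℝ)
    (hfin : ∀ n, (En n).Finite)
    (hφ0 : ∀ i, 0 ≤ φ i)
    (hgrow : ∀ M : ℝ, ∃ N : ℕ, ∀ n ≥ N, ∀ i ∉ En n, M ≤ φ i)
    (c : ℝ) (hdrift : DriftLE q φ c) :
    ∀ lam : ℝ, 0 < lam → ∀ u : E → ℝ, IsLamSolution q lam u → u = 0 := by
  intro lam hlam u hu
  obtain ⟨hbox, heq⟩ := hu
  -- choose k = m+1 with c ≤ (m+1) * lam
  obtain ⟨m, hm⟩ : ∃ m : ℕ, c ≤ ((m:ℝ)+1) * lam := by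
    obtain ⟨m, hm⟩ := exists_nat_gt (c / lam)
    exact ⟨m, by
      have := (div_lt_iff₀ hlam).mp hm
      nlinarith⟩
  set k := m + 1 with hk
  set v : E → ℝ := fun j => u j ^ k with hv
  have hv0 : ∀ j, 0 ≤ v j := fun j => pow_nonneg (hbox j).1 k
  have hv1 : ∀ j, v j ≤ 1 := fun j => pow_le_one₀ (hbox j).1 (hbox j).2
  -- subsolution property
  have hsub : ∀ i, (((k:ℝ)) * lam + -q i i) * v i ≤
      ∑' j, (if j = i then 0 else q i j * v j) := by
    intro i
    set a := u i with ha
    have ha0 : 0 ≤ a := (hbox i).1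
    -- lower bound function
    have hls : HasSum (fun j => (a^k - (k:ℝ)*a^k) * (if j = i then 0 else q i j)
          + (k:ℝ)*a^m * (if j = i then 0 else q i j * u j))
        ((a^k - (k:ℝ)*a^k) * (-q i i) + (k:ℝ)*a^m * ((lam + -q i i) * u i)) :=
      ((hq.2.2 i).mul_left _).add ((heq i).mul_left _)
    have hfeq : (fun j => (a^k - (k:ℝ)*a^k) * (if j = i then 0 else q i j)
          + (k:ℝ)*a^m * (if j = i then 0 else q i j * u j))
        = (fun j => if j = i then 0 else q i j * (a^k + (k:ℝ)*a^m*(u j - a))) := by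
      funext j
      by_cases hji : j = i
      · simp [hji]
      · simp only [hji, if_false]
        have hma : a ^ m * a = a ^ k := by rw [hk, pow_succ]
        linear_combination (k : ℝ) * q i j * hma
    rw [hfeq] at hls
    have hval : (a^k - (k:ℝ)*a^k) * (-q i i) + (k:ℝ)*a^m * ((lam + -q i i) * u i)
        = ((k:ℝ) * lam + -q i i) * v i := by
      have hma : a ^ m * a = a ^ k := by rw [hk, pow_succ]
      simp only [hv, ← ha]
      linear_combination (k : ℝ) * (lam + -q i i) * hma
    rw [hval] at hls
    refine le_trans (le_of_eq hls.tsum_eq.symm) ?_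
    apply Summable.tsum_le_tsum _ hls.summable (summable_mul hq i hv0 hv1)
    intro j
    by_cases hji : j = i
    · simp [hji]
    · simp only [hji, if_false]
      apply mul_le_mul_of_nonneg_left _ (hq.1 i j (fun hh => hji hh.symm))
      have := pow_convex_ineq m (hbox j).1 ha0
      calc a^k + (k:ℝ)*a^m*(u j - a) = a^(m+1) + ((m:ℝ)+1)*a^m*(u j - a) := by
            rw [hk]; push_cast; ring
        _ ≤ u j ^ (m+1) := pow_convex_ineq m (hbox j).1 ha0
        _ = v j := by rw [hv, hk]
  -- maximum principle: ∀ ε > 0, ∀ j, v j ≤ ε * φ j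
  have hmaxp : ∀ ε : ℝ, 0 < ε → ∀ j, v j ≤ ε * φ j := by
    intro ε hε j0
    set w : E → ℝ := fun j => v j - ε * φ j with hw
    obtain ⟨N, hN⟩ := hgrow ((2 - w j0) / ε)
    set S : Finset E := (hfin N).toFinset ∪ {j0} with hS
    have hj0S : j0 ∈ S := Finset.mem_union_right _ (Finset.mem_singleton_self j0)
    obtain ⟨i0, hi0S, hmax⟩ := Finset.exists_max_image S w ⟨j0, hj0S⟩
    have hall : ∀ j, w j ≤ w i0 := by
      intro j
      by_cases hjS : j ∈ S
      · exact hmax j hjS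
      · have hjE : j ∉ En N := by
          intro hmem
          exact hjS (Finset.mem_union_left _ ((hfin N).mem_toFinset.mpr hmem))
        have hφj : (2 - w j0) / ε ≤ φ j := hN N le_rfl j hjE
        have h2 : 2 - w j0 ≤ ε * φ j := by
          have := mul_le_mul_of_nonneg_left hφj hε.le
          rwa [mul_div_cancel₀ _ (ne_of_gt hε)] at this
        have h3 := hv1 j
        have h4 := hmax j0 hj0S
        simp only [hw] at h2 h4 ⊢
        linarith
    -- at the max point
    have key : (k:ℝ) * lam * v i0 ≤ ε * (c * φ i0) := by
      have h1 := hsub i0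
      have hpt : (fun j => if j = i0 then 0 else q i0 j * (w i0 + ε * φ j))
          = (fun j => w i0 * (if j = i0 then 0 else q i0 j)
              + ε * (if j = i0 then 0 else q i0 j * φ j)) := by
        funext j
        by_cases hji : j = i0
        · simp [hji]
        · simp only [hji, if_false]; ring
      have hrs : Summable (fun j => if j = i0 then 0 else q i0 j * (w i0 + ε * φ j)) := by
        rw [hpt]
        exact (((summable_row hq i0).mul_left _).add ((hdrift i0).1.mul_left _))
      have h2 : ∑' j, (if j = i0 then 0 else q i0 j * v j)
          ≤ ∑' j, (if j = i0 then 0 else q i0 j * (w i0 + ε * φ j)) := by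
        apply Summable.tsum_le_tsum _ (summable_mul hq i0 hv0 hv1) hrs
        intro j
        by_cases hji : j = i0
        · simp [hji]
        · simp only [hji, if_false]
          apply mul_le_mul_of_nonneg_left _ (hq.1 i0 j (fun hh => hji hh.symm))
          have := hall j
          simp only [hw] at this ⊢
          linarith
      have h3 : ∑' j, (if j = i0 then 0 else q i0 j * (w i0 + ε * φ j))
          = w i0 * (-q i0 i0) + ε * ∑' j, (if j = i0 then 0 else q i0 j * φ j) := by
        have hps : HasSum (fun j => w i0 * (if j = i0 then 0 else q i0 j)
              + ε * (if j = i0 then 0 else q i0 j * φ j))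
            (w i0 * (-q i0 i0) + ε * ∑' j, (if j = i0 then 0 else q i0 j * φ j)) :=
          ((hq.2.2 i0).mul_left _).add ((hdrift i0).1.hasSum.mul_left _)
        rw [← hps.tsum_eq, hpt]
      have h4 : ∑' j, (if j = i0 then 0 else q i0 j * φ j)
          ≤ c * φ i0 + (-q i0 i0) * φ i0 := by linarith [(hdrift i0).2]
      have hq0 := qi_nonneg hq i0
      have hwv : w i0 + ε * φ i0 = v i0 := by simp [hw]
      nlinarith [h1, h2, h3, h4, mul_le_mul_of_nonneg_left h4 hε.le]
    have hcle : ε * (c * φ i0) ≤ ε * ((k:ℝ) * lam * φ i0) := by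
      apply mul_le_mul_of_nonneg_left _ hε.le
      apply mul_le_mul_of_nonneg_right _ (hφ0 i0)
      calc c ≤ ((m:ℝ)+1) * lam := hm
        _ = (k:ℝ) * lam := by rw [hk]; push_cast; ring
    have hklam : 0 < (k:ℝ) * lam := by
      apply mul_pos _ hlam
      rw [hk]; positivity
    have hvi0 : v i0 ≤ ε * φ i0 := by
      have : (k:ℝ) * lam * v i0 ≤ (k:ℝ) * lam * (ε * φ i0) := by nlinarith [key, hcle]
      exact le_of_mul_le_mul_left this hklam
    have := hall j0
    simp only [hw] at this
    linarith
  -- conclude u = 0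
  funext j
  have hvj : v j ≤ 0 := by
    by_contra hpos
    push_neg at hpos
    set ε := v j / (2 * (φ j + 1)) with hε
    have hφ1 : 0 < φ j + 1 := by linarith [hφ0 j]
    have hεpos : 0 < ε := by
      apply div_pos hpos; linarith
    have := hmaxp ε hεpos j
    rw [hε] at this
    have h2 : v j / (2 * (φ j + 1)) * φ j < v j := by
      rw [div_mul_eq_mul_div, div_lt_iff₀ (by linarith : (0:ℝ) < 2 * (φ j + 1))]
      nlinarith [hφ0 j]
    linarith
  have : u j ^ k = 0 := le_antisymm hvj (hv0 j)
  have := pow_eq_zero_iff (by omega : k ≠ 0) |>.mp this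
  simpa using this

theorem necessity {E : Type*} [Countable E] (q : E → E → ℝ) (hq : IsQMatrix q)
    (H : ∀ lam : ℝ, 0 < lam → ∀ u : E → ℝ, IsLamSolution q lam u → u = 0) :
    ∃ (En : ℕ → Set E) (φ : E → ℝ),
      (∀ n, (En n).Finite) ∧ (∀ n, En n ⊆ En (n + 1)) ∧ (⋃ n, En n) = Set.univ ∧
      (∀ i, 0 ≤ φ i) ∧ (∀ M : ℝ, ∃ N : ℕ, ∀ n ≥ N, ∀ i ∉ En n, M ≤ φ i) ∧
      (∃ c : ℝ, DriftLE q φ c) := by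
  cases isEmpty_or_nonempty E with
  | inl hE =>
    refine ⟨fun _ => ∅, fun _ => 0, fun _ => Set.finite_empty, fun _ => subset_rfl, ?_,
      fun i => le_rfl, fun M => ⟨0, fun n _ i _ => isEmptyElim i⟩,
      ⟨0, fun i => isEmptyElim i⟩⟩
    ext i
    exact isEmptyElim i
  | inr hE =>
    obtain ⟨e, he⟩ := exists_surjective_nat E
    set Fn : ℕ → Finset E := fun n => (Finset.range (n+1)).image e with hFn
    have hFnmono : Monotone Fn := fun a b hab =>
      Finset.image_subset_image (Finset.range_subset_range.mpr (by omega))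
    have hFnmem : ∀ k n, k ≤ n → e k ∈ Fn n := fun k n hk =>
      Finset.mem_image.mpr ⟨k, Finset.mem_range.mpr (by omega), rfl⟩
    have hZanti : ∀ i, Antitone (fun n => Xf q (Fn n) i) :=
      fun i a b hab => Xf_mono hq (hFnmono hab) i
    set Z : E → ℝ := fun i => ⨅ n, Xf q (Fn n) i with hZ
    have hZbdd : ∀ i, BddBelow (Set.range fun n => Xf q (Fn n) i) := by
      intro i
      refine ⟨0, ?_⟩
      rintro _ ⟨n, rfl⟩
      exact (Xf_box hq (Fn n) i).1
    have hZtend : ∀ i, Tendsto (fun n => Xf q (Fn n) i) atTop (nhds (Z i)) :=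
      fun i => tendsto_atTop_ciInf (hZanti i) (hZbdd i)
    have hZbox : InBox Z := fun i =>
      ⟨le_ciInf fun n => (Xf_box hq (Fn n) i).1,
        (ciInf_le (hZbdd i) 0).trans (Xf_box hq (Fn 0) i).2⟩
    have hZsol : IsLamSolution q 1 Z := by
      refine ⟨hZbox, ?_⟩
      intro i
      obtain ⟨k, hk⟩ := he i
      have hdom : Tendsto (fun n => ∑' j, (if j = i then 0 else q i j * Xf q (Fn n) j))
          atTop (nhds (∑' j, (if j = i then 0 else q i j * Z j))) := by
        apply tendsto_tsum_of_dominated_convergence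
          (bound := fun j => if j = i then 0 else q i j) (summable_row hq i)
        · intro j
          by_cases hji : j = i
          · simp only [hji, if_pos rfl]
            exact tendsto_const_nhds
          · simp only [hji, if_false]
            exact (hZtend j).const_mul _
        · filter_upwards with n j
          by_cases hji : j = i
          · simp [hji]
          · simp only [hji, if_false]
            rw [Real.norm_eq_abs, abs_of_nonneg (mul_nonneg
              (hq.1 i j fun hh => hji hh.symm) (Xf_box hq (Fn n) j).1)]
            calc q i j * Xf q (Fn n) j ≤ q i j * 1 :=
                  mul_le_mul_of_nonneg_left (Xf_box hq (Fn n) j).2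
                    (hq.1 i j fun hh => hji hh.symm)
              _ = q i j := mul_one _
      have hLHS : Tendsto (fun n => (1 + -q i i) * Xf q (Fn n) i) atTop
          (nhds ((1 + -q i i) * Z i)) := (hZtend i).const_mul _
      have heqev : (fun n => (1 + -q i i) * Xf q (Fn n) i)
          =ᶠ[atTop] (fun n => ∑' j, (if j = i then 0 else q i j * Xf q (Fn n) j)) := by
        filter_upwards [eventually_ge_atTop k] with n hn
        have : i ∈ Fn n := by rw [← hk]; exact hFnmem k n hn
        exact Xf_fixed hq (Fn n) this
      have h3 := tendsto_nhds_unique (hLHS.congr' heqev) hdom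
      have hsummable := summable_mul hq i (fun j => (hZbox j).1) (fun j => (hZbox j).2)
      rw [Summable.hasSum_iff hsummable]
      exact h3.symm
    have hZ0 : Z = 0 := H 1 one_pos Z hZsol
    have htend0 : ∀ i, Tendsto (fun n => Xf q (Fn n) i) atTop (nhds 0) := by
      intro i
      have h := hZtend i
      rwa [show Z i = 0 from by rw [hZ0]; rfl] at h
    have hPev : ∀ m : ℕ, ∀ᶠ n in atTop, ∀ j, j ≤ m → Xf q (Fn n) (e j) ≤ (1/2:ℝ)^m := by
      intro m
      have hev : ∀ j : ℕ, ∀ᶠ n in atTop, Xf q (Fn n) (e j) ≤ (1/2:ℝ)^m := by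
        intro j
        have hpos : (0:ℝ) < (1/2)^m := by positivity
        exact ((htend0 (e j)).eventually_lt_const hpos).mono (fun n hn => hn.le)
      refine ((Filter.eventually_all_finset (Finset.range (m+1))).mpr
        (fun j _ => hev j)).mono ?_
      intro n hn j hj
      exact hn j (Finset.mem_range.mpr (by omega))
    obtain ⟨ns, hnsmono, hns⟩ := Filter.extraction_forall_of_eventually hPev
    set Y : ℕ → E → ℝ := fun m => Xf q (Fn (ns m)) with hY
    have hYbox : ∀ m, InBox (Y m) := fun m => Xf_box hq _
    have hYsum : ∀ i, Summable (fun m => Y m i) := by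
      intro i
      obtain ⟨k, hk⟩ := he i
      refine Summable.of_nonneg_of_le (f := fun m => (if m < k then 1 else 0) + (1/2:ℝ)^m)
        (fun m => (hYbox m i).1) ?_ ?_
      · intro m
        by_cases hmk : m < k
        · have h1 : Y m i ≤ 1 := (hYbox m i).2
          have h2 : (0:ℝ) ≤ (1/2)^m := by positivity
          simp only [hmk, if_true]
          linarith
        · have hkm : k ≤ m := not_lt.mp hmk
          have h1 := hns m k hkm
          rw [hk] at h1
          simp only [hmk, if_false, zero_add]
          exact h1
      · refine Summable.add ?_ ?_
        · apply summable_of_ne_finset_zero (s := Finset.range k)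
          intro m hm
          have : ¬ m < k := fun hc => hm (Finset.mem_range.mpr hc)
          simp [this]
        · exact summable_geometric_of_lt_one (by norm_num) (by norm_num)
    set φ : E → ℝ := fun i => ∑' m, Y m i with hφ
    refine ⟨fun m => ↑(Fn (ns m)), φ, fun n => (Fn (ns n)).finite_toSet, ?_, ?_,
      fun i => tsum_nonneg (fun m => (hYbox m i).1), ?_, ⟨1, ?_⟩⟩
    · intro n
      exact Finset.coe_subset.mpr (hFnmono (hnsmono.monotone (Nat.le_succ n)))
    · ext i
      simp only [Set.mem_iUnion, Set.mem_univ, iff_true]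
      obtain ⟨k, hk⟩ := he i
      exact ⟨k, by rw [← hk]; exact Finset.mem_coe.mpr (hFnmem k (ns k) hnsmono.le_apply)⟩
    · intro M
      refine ⟨⌈M⌉₊, fun n hn i hi => ?_⟩
      have hone : ∀ m ≤ n, Y m i = 1 := by
        intro m hm
        apply Xf_off
        intro hmem
        exact hi (Finset.mem_coe.mpr (hFnmono (hnsmono.monotone hm) hmem))
      calc M ≤ (⌈M⌉₊ : ℝ) := Nat.le_ceil M
        _ ≤ ((n+1 : ℕ) : ℝ) := by exact_mod_cast Nat.le_succ_of_le hn
        _ = ∑ m ∈ Finset.range (n+1), Y m i := by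
            rw [Finset.sum_congr rfl
              (fun m hm => hone m (Nat.lt_succ_iff.mp (Finset.mem_range.mp hm)))]
            simp
        _ ≤ φ i := Summable.sum_le_tsum _ (fun m _ => (hYbox m i).1) (hYsum i)
    · intro i
      have hpermB : ∀ m, ∑' j, (if j = i then 0 else q i j * Y m j)
          ≤ (1 + -q i i) * Y m i := fun m => Xf_drift hq (Fn (ns m)) i
      have hparts : ∀ m, ∀ s : Finset E,
          ∑ j ∈ s, (if j = i then 0 else q i j * Y m j)
            ≤ (1 + -q i i) * Y m i := by
        intro m s
        calc ∑ j ∈ s, (if j = i then 0 else q i j * Y m j)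
            ≤ ∑' j, (if j = i then 0 else q i j * Y m j) :=
              Summable.sum_le_tsum s (fun j _ => multerm_nonneg hq i (fun j' => (hYbox m j').1) j)
                (summable_mul hq i (fun j' => (hYbox m j').1) (fun j' => (hYbox m j').2))
          _ ≤ (1 + -q i i) * Y m i := hpermB m
      have hfsb : ∀ s : Finset E, ∑ j ∈ s, (if j = i then 0 else q i j * φ j)
          ≤ (1 + -q i i) * φ i := by
        intro s
        have hterm : ∀ j, (if j = i then 0 else q i j * φ j)
            = ∑' m, (if j = i then 0 else q i j * Y m j) := by
          intro j
          by_cases hji : j = i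
          · simp [hji]
          · simp only [hji, if_false, hφ]
            rw [tsum_mul_left]
        have hsuminner : ∀ j ∈ s, Summable (fun m => if j = i then 0 else q i j * Y m j) := by
          intro j _
          by_cases hji : j = i
          · simp only [hji, if_pos rfl]
            exact summable_zero
          · simp only [hji, if_false]
            exact (hYsum j).mul_left _
        calc ∑ j ∈ s, (if j = i then 0 else q i j * φ j)
            = ∑ j ∈ s, ∑' m, (if j = i then 0 else q i j * Y m j) :=
              Finset.sum_congr rfl (fun j _ => hterm j)
          _ = ∑' m, ∑ j ∈ s, (if j = i then 0 else q i j * Y m j) := (Summable.tsum_finsetSum hsuminner).symm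
          _ ≤ ∑' m, (1 + -q i i) * Y m i := by
              refine Summable.tsum_le_tsum (fun m => hparts m s) ?_ ((hYsum i).mul_left _)
              refine Summable.of_nonneg_of_le
                (fun m => Finset.sum_nonneg
                  (fun j _ => multerm_nonneg hq i (fun j' => (hYbox m j').1) j))
                (fun m => hparts m s) ((hYsum i).mul_left _)
          _ = (1 + -q i i) * φ i := by rw [tsum_mul_left]
      have hnn : ∀ j, 0 ≤ (if j = i then 0 else q i j * φ j) :=
        multerm_nonneg hq i (fun j => tsum_nonneg fun m => (hYbox m j).1)
      have hsum : Summable (fun j => if j = i then 0 else q i j * φ j) :=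
        summable_of_sum_le hnn hfsb
      refine ⟨hsum, ?_⟩
      have hts := Summable.tsum_le_of_sum_le hsum hfsb
      have hexp : (1 + -q i i) * φ i = 1 * φ i + (-q i i) * φ i := by ring
      linarith

end QTools

/-- Theorem 5 (uniqueness criterion with finite exhausting sets, via criterion
(C3)): the `Q`-process is unique (i.e. for every `λ > 0` the only `λ`-solution
is `0`) iff conditions (U1)′ and (U2) hold simultaneously. -/
theorem uniqueness_criterion_finite {E : Type*} [Countable E] (q : E → E → ℝ)
    (hq : IsQMatrix q) :
    (∀ lam : ℝ, 0 < lam → ∀ u : E → ℝ, IsLamSolution q lam u → u = 0) ↔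
      ∃ (En : ℕ → Set E) (φ : E → ℝ),
        -- (U1)′
        (∀ n, (En n).Finite) ∧
        (∀ n, En n ⊆ En (n + 1)) ∧
        (⋃ n, En n) = Set.univ ∧
        (∀ i, 0 ≤ φ i) ∧
        (∀ M : ℝ, ∃ N : ℕ, ∀ n ≥ N, ∀ i ∉ En n, M ≤ φ i) ∧
        -- (U2)
        (∃ c : ℝ, DriftLE q φ c) := by
  constructor
  · intro H
    exact QTools.necessity q hq H
  · rintro ⟨En, φ, hfin, hmono, hunion, hφ0, hgrow, c, hdrift⟩
    exact QTools.sufficiency q hq En φ hfin hφ0 hgrow c hdrift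
end

section
/- Corollary 3: Let q be a totally stable, conservative Q-matrix on a countable set E. Suppose there exist a function φ : E → [0,∞) with φ(i) ≥ q_i for every i, and a constant c ∈ ℝ, such that Qφ ≤ cφ. Then for every λ > 0 the only λ-solution is u = 0 (equivalently, the Q-process is unique). -/
open scoped BigOperators Classical

/-- Corollary 3: if there are `φ ≥ q` (pointwise, `φ` nonnegative) and a
constant `c` with `Qφ ≤ cφ`, then for every `λ > 0` the only `λ`-solution is
`0` (equivalently, the `Q`-process is unique). -/
theorem uniqueness_of_drift_ge_rates {E : Type*} [Countable E] (q : E → E → ℝ)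
    (hq : IsQMatrix q) (φ : E → ℝ) (hφ0 : ∀ i, 0 ≤ φ i)
    (hφq : ∀ i, -q i i ≤ φ i) (c : ℝ) (hdrift : DriftLE q φ c) :
    ∀ lam : ℝ, 0 < lam → ∀ u : E → ℝ, IsLamSolution q lam u → u = 0 := by
  classical
  obtain ⟨hoff, hdiag, hrow⟩ := hq
  intro lam hlam u hu
  obtain ⟨hu01, huEq⟩ := hu
  rcases isEmpty_or_nonempty E with hE | hE
  · funext i; exact absurd (Nonempty.intro i) (not_nonempty_iff.mpr hE)
  set C : ℝ := max c 0 with hC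
  have hC0 : 0 ≤ C := le_max_right _ _
  have hcC : c ≤ C := le_max_left _ _
  set h : E → ℝ := fun i => Real.log (1 + φ i) with hh
  have hh0 : ∀ i, 0 ≤ h i := fun i => Real.log_nonneg (by linarith [hφ0 i])
  have hhφ : ∀ i, h i ≤ φ i := by
    intro i
    have := Real.log_le_sub_one_of_pos (x := 1 + φ i) (by linarith [hφ0 i])
    simp only [hh]; linarith
  -- drift bound for h = log(1+φ): ∑_{j≠i} q(i,j)(h j - h i) ≤ C
  have hQh : ∀ i, Summable (fun j => if j = i then 0 else q i j * (h j - h i)) ∧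
      (∑' j, if j = i then 0 else q i j * (h j - h i)) ≤ C := by
    intro i
    have hrow_s : Summable (fun j => if j = i then 0 else q i j) := (hrow i).summable
    have hqφ : Summable (fun j => if j = i then 0 else q i j * φ j) := (hdrift i).1
    have hφi : (0:ℝ) < 1 + φ i := by linarith [hφ0 i]
    have hgsum : Summable (fun j => (if j = i then 0 else q i j * φ j)
        + (if j = i then 0 else q i j) * h i) := hqφ.add (hrow_s.mul_right (h i))
    have habs : ∀ j, |if j = i then 0 else q i j * (h j - h i)| ≤
        (if j = i then 0 else q i j * φ j) + (if j = i then 0 else q i j) * h i := by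
      intro j
      by_cases hji : j = i
      · simp [hji]
      · simp only [if_neg hji]
        have h3 : 0 ≤ q i j := hoff i j (fun e => hji e.symm)
        rw [abs_mul, abs_of_nonneg h3]
        have habs2 : |h j - h i| ≤ φ j + h i :=
          abs_le.2 ⟨by linarith [hh0 j, hh0 i, hhφ j], by linarith [hh0 i, hhφ j]⟩
        calc q i j * |h j - h i| ≤ q i j * (φ j + h i) :=
              mul_le_mul_of_nonneg_left habs2 h3
          _ = q i j * φ j + q i j * h i := by ring
    have hfs : Summable (fun j => if j = i then 0 else q i j * (h j - h i)) :=
      Summable.of_abs (Summable.of_nonneg_of_le (fun j => abs_nonneg _) habs hgsum)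
    refine ⟨hfs, ?_⟩
    have hbsum : Summable (fun j => if j = i then 0 else q i j * (φ j - φ i)) := by
      have heq : (fun j => if j = i then 0 else q i j * (φ j - φ i)) =
          fun j => (if j = i then 0 else q i j * φ j) - (if j = i then 0 else q i j) * φ i := by
        funext j; by_cases hji : j = i
        · simp [hji]
        · simp only [if_neg hji]; ring
      rw [heq]; exact hqφ.sub (hrow_s.mul_right (φ i))
    have hbtsum : (∑' j, if j = i then 0 else q i j * (φ j - φ i)) ≤ c * φ i := by
      have h1 : HasSum (fun j => if j = i then 0 else q i j * (φ j - φ i))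
          ((∑' j, if j = i then 0 else q i j * φ j) - (-q i i) * φ i) := by
        have h2 := hqφ.hasSum.sub ((hrow i).mul_right (φ i))
        convert h2 using 1
        · rfl
        funext j; by_cases hji : j = i
        · simp [hji]
        · simp only [if_neg hji]; ring
      rw [h1.tsum_eq]
      exact (hdrift i).2
    have hpt : ∀ j, (if j = i then 0 else q i j * (h j - h i)) ≤
        (if j = i then 0 else q i j * (φ j - φ i)) * (1 + φ i)⁻¹ := by
      intro j
      by_cases hji : j = i
      · simp [hji]
      · simp only [if_neg hji]
        have h3 : 0 ≤ q i j := hoff i j (fun e => hji e.symm)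
        have hφj : (0:ℝ) < 1 + φ j := by linarith [hφ0 j]
        have hlog : h j - h i ≤ (φ j - φ i) * (1 + φ i)⁻¹ := by
          have hx : (0:ℝ) < (1 + φ j) / (1 + φ i) := div_pos hφj hφi
          have h4 := Real.log_le_sub_one_of_pos hx
          rw [Real.log_div (ne_of_gt hφj) (ne_of_gt hφi)] at h4
          have h6 : (1 + φ j) / (1 + φ i) - 1 = (φ j - φ i) * (1 + φ i)⁻¹ := by
            field_simp
            ring
          simp only [hh]
          linarith [h6 ▸ h4]
        calc q i j * (h j - h i) ≤ q i j * ((φ j - φ i) * (1 + φ i)⁻¹) :=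
              mul_le_mul_of_nonneg_left hlog h3
          _ = q i j * (φ j - φ i) * (1 + φ i)⁻¹ := by ring
    have hsum2 : Summable (fun j => (if j = i then 0 else q i j * (φ j - φ i)) * (1 + φ i)⁻¹) :=
      hbsum.mul_right _
    have hle := Summable.tsum_le_tsum hpt hfs hsum2
    rw [tsum_mul_right] at hle
    refine hle.trans ?_
    rw [← div_eq_mul_inv, div_le_iff₀ hφi]
    nlinarith [hbtsum, hφ0 i, mul_nonneg (sub_nonneg.2 hcC) (hφ0 i)]
  -- suprema
  have hbdd : ∀ ε : ℝ, 0 ≤ ε → BddAbove (Set.range fun i => u i - ε * h i) := by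
    intro ε hε
    refine ⟨1, ?_⟩
    rintro x ⟨i, rfl⟩
    simp only
    linarith [(hu01 i).2, mul_nonneg hε (hh0 i)]
  have hle_sup : ∀ ε : ℝ, 0 ≤ ε → ∀ j, u j - ε * h j ≤ ⨆ i, (u i - ε * h i) :=
    fun ε hε j => le_ciSup (hbdd ε hε) j
  have hsup_le_one : ∀ ε : ℝ, 0 ≤ ε → (⨆ i, (u i - ε * h i)) ≤ 1 := by
    intro ε hε
    refine ciSup_le fun j => ?_
    linarith [(hu01 j).2, mul_nonneg hε (hh0 j)]
  -- key claim
  have key : ∀ ε : ℝ, 0 < ε → (⨆ i, (u i - ε * h i)) ≤ ε * C / lam := by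
    intro ε hε
    refine le_of_forall_pos_le_add ?_
    intro η hη
    by_cases hFpos : (⨆ i, (u i - ε * h i)) ≤ 0
    · have : 0 ≤ ε * C / lam := by positivity
      linarith
    push_neg at hFpos
    set F : ℝ := ⨆ i, (u i - ε * h i) with hFdef
    set K : ℝ := Real.exp (4 / ε) with hK
    have hKpos : 0 < K := Real.exp_pos _
    set δ : ℝ := min 1 (η * lam / (lam + K)) with hδ
    have hδpos : 0 < δ := lt_min one_pos (by positivity)
    have hδ1 : δ ≤ 1 := min_le_left _ _
    obtain ⟨i, hi⟩ : ∃ i, F - δ < u i - ε * h i :=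
      exists_lt_of_lt_ciSup (by linarith : F - δ < F)
    -- h i is bounded
    have hhi : h i ≤ 4 / ε := by
      have h1 : u i - (ε / 2) * h i ≤ ⨆ j, (u j - (ε / 2) * h j) :=
        hle_sup (ε / 2) (by linarith) i
      have h2 : (⨆ j, (u j - (ε / 2) * h j)) ≤ 1 := hsup_le_one (ε / 2) (by linarith)
      rw [le_div_iff₀ hε]
      nlinarith [hh0 i]
    have hφK : φ i ≤ K := by
      have h1 : 1 + φ i ≤ K := by
        have h2 : 1 + φ i = Real.exp (Real.log (1 + φ i)) :=
          (Real.exp_log (by linarith [hφ0 i])).symm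
        rw [h2, hK]
        exact Real.exp_le_exp.2 hhi
      linarith
    have hqK : -q i i ≤ K := le_trans (hφq i) hφK
    -- the equation at i, in difference form
    have hEq : HasSum (fun j => if j = i then 0 else q i j * (u j - u i)) (lam * u i) := by
      have hfun : (fun j => if j = i then 0 else q i j * (u j - u i)) =
          fun j => (if j = i then 0 else q i j * u j) - (if j = i then 0 else q i j) * u i := by
        funext j; by_cases hji : j = i
        · simp [hji]
        · simp only [if_neg hji]; ring
      rw [hfun, show lam * u i = (lam + -q i i) * u i - (-q i i) * u i by ring]
      exact (huEq i).sub ((hrow i).mul_right (u i))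
    -- pointwise comparison
    have hpt : ∀ j, (if j = i then 0 else q i j * (u j - u i)) ≤
        ε * (if j = i then 0 else q i j * (h j - h i)) + δ * (if j = i then 0 else q i j) := by
      intro j
      by_cases hji : j = i
      · simp [hji]
      · simp only [if_neg hji]
        have h3 : 0 ≤ q i j := hoff i j (fun e => hji e.symm)
        have h1 : u j - ε * h j ≤ F := hle_sup ε hε.le j
        have h4 : u j - u i ≤ ε * (h j - h i) + δ := by linarith
        calc q i j * (u j - u i) ≤ q i j * (ε * (h j - h i) + δ) :=
              mul_le_mul_of_nonneg_left h4 h3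
          _ = ε * (q i j * (h j - h i)) + δ * q i j := by ring
    have hrhs : Summable (fun j => ε * (if j = i then 0 else q i j * (h j - h i))
        + δ * (if j = i then 0 else q i j)) :=
      ((hQh i).1.mul_left ε).add ((hrow i).summable.mul_left δ)
    have hsum_le : lam * u i ≤
        ε * (∑' j, if j = i then 0 else q i j * (h j - h i)) + δ * (-q i i) := by
      have hts := Summable.tsum_le_tsum hpt hEq.summable hrhs
      rw [hEq.tsum_eq] at hts
      rwa [Summable.tsum_add ((hQh i).1.mul_left ε) ((hrow i).summable.mul_left δ),
        tsum_mul_left, tsum_mul_left, (hrow i).tsum_eq] at hts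
    have hfinal : lam * u i ≤ ε * C + δ * K := by
      have hT := (hQh i).2
      nlinarith [hδpos.le, hε.le]
    have hui : F - δ < u i := by
      have := hh0 i
      nlinarith [hε.le]
    have hδ2 : δ * (lam + K) ≤ η * lam := by
      have hmin : δ ≤ η * lam / (lam + K) := min_le_right _ _
      have hlk : 0 < lam + K := by positivity
      rw [le_div_iff₀ hlk] at hmin
      linarith
    rw [show ε * C / lam + η = (ε * C + η * lam) / lam by field_simp, le_div_iff₀ hlam]
    nlinarith [mul_lt_mul_of_pos_left hui hlam]
  -- conclusion
  funext i0
  simp only [Pi.zero_apply]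
  have hA : 0 ≤ C / lam + h i0 := add_nonneg (div_nonneg hC0 hlam.le) (hh0 i0)
  have hup : u i0 ≤ 0 := by
    refine le_of_forall_pos_le_add ?_
    intro η hη
    set ε : ℝ := η / (C / lam + h i0 + 1) with hε
    have hden : (0:ℝ) < C / lam + h i0 + 1 := by linarith
    have hεpos : 0 < ε := div_pos hη hden
    have h1 : u i0 - ε * h i0 ≤ ⨆ i, (u i - ε * h i) := hle_sup ε hεpos.le i0
    have h2 := key ε hεpos
    have h3 : u i0 ≤ ε * (C / lam + h i0) := by
      have : ε * C / lam = ε * (C / lam) := by ring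
      nlinarith
    have h4 : ε * (C / lam + h i0) ≤ η := by
      rw [hε, div_mul_eq_mul_div, div_le_iff₀ hden]
      nlinarith
    linarith
  exact le_antisymm hup (hu01 i0).1
end

section
/- Non-uniqueness criterion, sufficiency (Theorem 4, via criterion (C3)): Let q be a totally stable, conservative Q-matrix on a countable set E. Suppose that for some constant c > 0 there exists a bounded function φ : E → ℝ with sup_{k ∈ E} φ(k) > 0 such that ∑_{j ≠ i} q(i,j)·φ(j) − q_i·φ(i) ≥ c·φ(i) for every i ∈ E (the series converges absolutely since φ is bounded). Then for every λ > 0 there exists a nonzero λ-solution (equivalently, the Q-processes are not unique). -/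
open scoped BigOperators Classical

open Filter Topology

private lemma summable_off {E : Type*} {q : E → E → ℝ}
    (hoff : ∀ i j, i ≠ j → 0 ≤ q i j)
    (hrow : ∀ i, HasSum (fun j => if j = i then 0 else q i j) (-q i i))
    {w : E → ℝ} (hw : ∀ j, 0 ≤ w j ∧ w j ≤ 1) (i : E) :
    Summable (fun j => if j = i then 0 else q i j * w j) := by
  apply (hrow i).summable.of_nonneg_of_le
  · intro j
    by_cases h : j = i
    · simp [h]
    · simp only [h, if_false]
      exact mul_nonneg (hoff i j (Ne.symm h)) (hw j).1
  · intro j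
    by_cases h : j = i
    · simp [h]
    · simp only [h, if_false]
      exact mul_le_of_le_one_right (hoff i j (Ne.symm h)) (hw j).2

/-- Monotone iteration: a `[0,1]`-valued supersolution of the drift inequality with
constant `lam` can be increased to an exact `lam`-solution. -/
private lemma key_exists {E : Type*} (q : E → E → ℝ)
    (hq : IsQMatrix q) (lam : ℝ) (hlam : 0 < lam) (ψ : E → ℝ)
    (hψ : ∀ i, 0 ≤ ψ i ∧ ψ i ≤ 1)
    (hd : DriftGE q ψ lam) :
    ∃ u : E → ℝ, IsLamSolution q lam u ∧ ∀ i, ψ i ≤ u i := by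
  obtain ⟨hoff, hdiag, hrow⟩ := hq
  have hQ : ∀ i, 0 ≤ -q i i := fun i => neg_nonneg.2 (hdiag i)
  have hlq : ∀ i, 0 < lam + -q i i := fun i => by linarith [hQ i]
  have hqsum : ∀ i, Summable (fun j => if j = i then 0 else q i j) :=
    fun i => (hrow i).summable
  set F : (E → ℝ) → E → ℝ :=
    fun w i => (∑' j, if j = i then 0 else q i j * w j) / (lam + -q i i) with hF
  have htsum_nonneg : ∀ (w : E → ℝ), (∀ j, 0 ≤ w j) → ∀ i,
      0 ≤ ∑' j, if j = i then 0 else q i j * w j := by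
    intro w hw i
    apply tsum_nonneg
    intro j
    by_cases h : j = i
    · simp [h]
    · simp only [h, if_false]
      exact mul_nonneg (hoff i j (Ne.symm h)) (hw j)
  have htsum_le : ∀ (w : E → ℝ), (∀ j, 0 ≤ w j ∧ w j ≤ 1) → ∀ i,
      (∑' j, if j = i then 0 else q i j * w j) ≤ -q i i := by
    intro w hw i
    have h1 : (∑' j, if j = i then 0 else q i j * w j)
        ≤ ∑' j, if j = i then 0 else q i j := by
      apply Summable.tsum_le_tsum _ (summable_off hoff hrow hw i) (hqsum i)
      intro j
      by_cases h : j = i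
      · simp [h]
      · simp only [h, if_false]
        exact mul_le_of_le_one_right (hoff i j (Ne.symm h)) (hw j).2
    rw [(hrow i).tsum_eq] at h1
    exact h1
  have hF01 : ∀ w, (∀ j, 0 ≤ w j ∧ w j ≤ 1) → ∀ i, 0 ≤ F w i ∧ F w i ≤ 1 := by
    intro w hw i
    constructor
    · exact div_nonneg (htsum_nonneg w (fun j => (hw j).1) i) (hlq i).le
    · rw [div_le_one (hlq i)]
      linarith [htsum_le w hw i]
  have hFmono : ∀ w w', (∀ j, 0 ≤ w j ∧ w j ≤ 1) → (∀ j, 0 ≤ w' j ∧ w' j ≤ 1) →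
      (∀ j, w j ≤ w' j) → ∀ i, F w i ≤ F w' i := by
    intro w w' hw hw' hle i
    apply (div_le_div_iff_of_pos_right (hlq i)).2
    apply Summable.tsum_le_tsum _ (summable_off hoff hrow hw i) (summable_off hoff hrow hw' i)
    intro j
    by_cases h : j = i
    · simp [h]
    · simp only [h, if_false]
      exact mul_le_mul_of_nonneg_left (hle j) (hoff i j (Ne.symm h))
  -- the iteration
  set w : ℕ → E → ℝ := fun n => F^[n] ψ with hwdef
  have hwsucc : ∀ n, w (n + 1) = F (w n) := fun n => Function.iterate_succ_apply' F n ψ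
  have hw0 : w 0 = ψ := rfl
  have hwfacts : ∀ n, (∀ i, 0 ≤ w n i ∧ w n i ≤ 1) ∧ ∀ i, w n i ≤ w (n + 1) i := by
    intro n
    induction n with
    | zero =>
      refine ⟨hψ, ?_⟩
      intro i
      rw [hwsucc 0, hw0]
      have h1 := (hd i).2
      rw [le_div_iff₀ (hlq i)]
      nlinarith [h1]
    | succ n ih =>
      have h01 : ∀ i, 0 ≤ w (n + 1) i ∧ w (n + 1) i ≤ 1 := by
        intro i
        rw [hwsucc n]
        exact hF01 (w n) ih.1 i
      refine ⟨h01, ?_⟩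
      intro i
      rw [hwsucc n, hwsucc (n + 1)]
      exact hFmono (w n) (w (n + 1)) ih.1 h01 ih.2 i
  have hmono : ∀ i, Monotone fun n => w n i :=
    fun i => monotone_nat_of_le_succ (fun n => (hwfacts n).2 i)
  have hbddi : ∀ i, BddAbove (Set.range fun n => w n i) := by
    intro i
    refine ⟨1, ?_⟩
    rintro x ⟨n, rfl⟩
    exact ((hwfacts n).1 i).2
  set u : E → ℝ := fun i => ⨆ n, w n i with hu
  have htend : ∀ i, Tendsto (fun n => w n i) atTop (𝓝 (u i)) :=
    fun i => tendsto_atTop_ciSup (hmono i) (hbddi i)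
  have hub : ∀ i n, w n i ≤ u i := fun i n => le_ciSup (hbddi i) n
  have hu01 : ∀ i, 0 ≤ u i ∧ u i ≤ 1 := by
    intro i
    exact ⟨le_trans ((hwfacts 0).1 i).1 (hub i 0), ciSup_le fun n => ((hwfacts n).1 i).2⟩
  have hψu : ∀ i, ψ i ≤ u i := fun i => hub i 0
  -- pass to the limit in the recursion
  have heqn : ∀ i, (∑' j, if j = i then 0 else q i j * u j) = (lam + -q i i) * u i := by
    intro i
    have T1 : Tendsto (fun n => (lam + -q i i) * w (n + 1) i) atTop
        (𝓝 ((lam + -q i i) * u i)) := by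
      apply tendsto_const_nhds.mul
      exact (htend i).comp (tendsto_add_atTop_nat 1)
    have T2 : Tendsto (fun n => ∑' j, if j = i then 0 else q i j * w n j) atTop
        (𝓝 (∑' j, if j = i then 0 else q i j * u j)) := by
      apply tendsto_tsum_of_dominated_convergence (hqsum i)
      · intro j
        by_cases h : j = i
        · simp [h]
        · simp only [h, if_false]
          exact tendsto_const_nhds.mul (htend j)
      · apply Filter.Eventually.of_forall
        intro n j
        by_cases h : j = i
        · simp [h]
        · simp only [h, if_false]
          rw [Real.norm_eq_abs,
            abs_of_nonneg (mul_nonneg (hoff i j (Ne.symm h)) (((hwfacts n).1 j).1))]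
          exact mul_le_of_le_one_right (hoff i j (Ne.symm h)) (((hwfacts n).1 j).2)
    have hrec : (fun n => (lam + -q i i) * w (n + 1) i)
        = fun n => ∑' j, if j = i then 0 else q i j * w n j := by
      funext n
      rw [hwsucc n]
      show (lam + -q i i) * ((∑' j, if j = i then 0 else q i j * w n j) / (lam + -q i i)) = _
      rw [mul_comm, div_mul_cancel₀ _ (hlq i).ne']
    rw [hrec] at T1
    exact (tendsto_nhds_unique T2 T1)
  refine ⟨u, ⟨hu01, ?_⟩, hψu⟩
  intro i
  exact (Summable.hasSum_iff (summable_off hoff hrow hu01 i)).2 (heqn i)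

private lemma rpow_sub_one_mul {θ x : ℝ} (hθ : 1 ≤ θ) (hx : 0 ≤ x) :
    x ^ (θ - 1) * x = x ^ θ := by
  rcases eq_or_lt_of_le hθ with hθ1 | hθ1
  · subst hθ1
    simp [Real.rpow_one]
  rcases eq_or_lt_of_le hx with hx0 | hx0
  · rw [← hx0, Real.zero_rpow (by linarith : θ - 1 ≠ 0),
      Real.zero_rpow (by linarith : θ ≠ 0), mul_zero]
  · rw [← Real.rpow_add_one hx0.ne' (θ - 1), sub_add_cancel]

/-- Tangent-line inequality for `t ↦ t ^ θ`, `θ ≥ 1`, on `[0, ∞)`. -/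
private lemma tangent_rpow {θ : ℝ} (hθ : 1 ≤ θ) {x y : ℝ} (hx : 0 ≤ x) (hy : 0 ≤ y) :
    x ^ θ + θ * x ^ (θ - 1) * (y - x) ≤ y ^ θ := by
  rcases eq_or_lt_of_le hθ with hθ1 | hθ1
  · subst hθ1
    simp [Real.rpow_one]
  rcases eq_or_lt_of_le hx with hx0 | hx0
  · rw [← hx0, Real.zero_rpow (by linarith : θ - 1 ≠ 0),
      Real.zero_rpow (by linarith : θ ≠ 0)]
    simpa using Real.rpow_nonneg hy θ
  · have hs : (-1 : ℝ) ≤ y / x - 1 := by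
      have h0 : 0 ≤ y / x := div_nonneg hy hx0.le
      linarith
    have hB := one_add_mul_self_le_rpow_one_add hs hθ
    have h1 : (1 : ℝ) + (y / x - 1) = y / x := by ring
    rw [h1] at hB
    have hxθ : 0 < x ^ θ := Real.rpow_pos_of_pos hx0 θ
    have hB2 := mul_le_mul_of_nonneg_right hB hxθ.le
    have h2 : (y / x) ^ θ * x ^ θ = y ^ θ := by
      rw [Real.div_rpow hy hx0.le, div_mul_cancel₀ _ hxθ.ne']
    rw [h2] at hB2
    refine le_trans (le_of_eq ?_) hB2
    have hxx : x ^ (θ - 1) * x = x ^ θ := rpow_sub_one_mul hθ1.le hx0.le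
    field_simp
    linear_combination θ * (y - x) * hxx

/-- Boosting the drift constant: if `u` is an exact `c'`-solution then `u ^ (lam / c')`
satisfies the drift inequality with constant `lam`, for `c' ≤ lam`. -/
private lemma drift_pow {E : Type*} {q : E → E → ℝ}
    (hq : IsQMatrix q) {c' lam : ℝ} (hc' : 0 < c') (hle : c' ≤ lam)
    {u : E → ℝ} (hu : IsLamSolution q c' u) :
    DriftGE q (fun i => u i ^ (lam / c')) lam := by
  obtain ⟨hoff, hdiag, hrow⟩ := hq
  obtain ⟨hu01, husum⟩ := hu
  set θ : ℝ := lam / c' with hθdef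
  have hθ : 1 ≤ θ := (one_le_div hc').2 hle
  have hθc : θ * c' = lam := div_mul_cancel₀ lam hc'.ne'
  have hψ01 : ∀ j, 0 ≤ u j ^ θ ∧ u j ^ θ ≤ 1 := by
    intro j
    exact ⟨Real.rpow_nonneg (hu01 j).1 θ,
      Real.rpow_le_one (hu01 j).1 (hu01 j).2 (by linarith)⟩
  intro i
  refine ⟨summable_off hoff hrow hψ01 i, ?_⟩
  set b : ℝ := θ * u i ^ (θ - 1) with hb
  set a : ℝ := u i ^ θ - b * u i with ha
  have hgf : ∀ j, (if j = i then (0:ℝ) else a * q i j + b * (q i j * u j))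
      ≤ (if j = i then 0 else q i j * u j ^ θ) := by
    intro j
    by_cases h : j = i
    · simp [h]
    · simp only [h, if_false]
      have htan := tangent_rpow hθ (hu01 i).1 (hu01 j).1
      have hq0 := hoff i j (Ne.symm h)
      calc a * q i j + b * (q i j * u j)
          = q i j * (u i ^ θ + θ * u i ^ (θ - 1) * (u j - u i)) := by rw [ha, hb]; ring
        _ ≤ q i j * u j ^ θ := mul_le_mul_of_nonneg_left htan hq0
  have hsg : Summable (fun j => if j = i then (0:ℝ) else a * q i j + b * (q i j * u j)) := by
    have h1 : (fun j => if j = i then (0:ℝ) else a * q i j + b * (q i j * u j))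
        = fun j => a * (if j = i then 0 else q i j)
            + b * (if j = i then 0 else q i j * u j) := by
      funext j
      by_cases h : j = i <;> simp [h]
    rw [h1]
    exact ((hrow i).summable.mul_left a).add ((husum i).summable.mul_left b)
  have htsg : (∑' j, if j = i then (0:ℝ) else a * q i j + b * (q i j * u j))
      = a * (-q i i) + b * ((c' + -q i i) * u i) := by
    have h1 : (fun j => if j = i then (0:ℝ) else a * q i j + b * (q i j * u j))
        = fun j => a * (if j = i then 0 else q i j)
            + b * (if j = i then 0 else q i j * u j) := by
      funext j
      by_cases h : j = i <;> simp [h]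
    rw [h1, Summable.tsum_add ((hrow i).summable.mul_left a) ((husum i).summable.mul_left b),
      tsum_mul_left, tsum_mul_left, (hrow i).tsum_eq, (husum i).tsum_eq]
  have hmain : (∑' j, if j = i then (0:ℝ) else a * q i j + b * (q i j * u j))
      ≤ ∑' j, if j = i then 0 else q i j * u j ^ θ :=
    Summable.tsum_le_tsum hgf hsg (summable_off hoff hrow hψ01 i)
  rw [htsg] at hmain
  have hbu : b * u i = θ * u i ^ θ := by
    rw [hb, mul_assoc, rpow_sub_one_mul hθ (hu01 i).1]
  have hval : a * (-q i i) + b * ((c' + -q i i) * u i)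
      = lam * u i ^ θ + (-q i i) * u i ^ θ := by
    have h3 : b * ((c' + -q i i) * u i) = (c' + -q i i) * (b * u i) := by ring
    rw [ha, h3, hbu]
    linear_combination (u i ^ θ) * hθc
  rw [hval] at hmain
  simp only
  linarith

/-- Non-uniqueness criterion, sufficiency (Theorem 4, via criterion (C3)):
if for some `c > 0` there is a bounded function `φ` with positive supremum
satisfying `Qφ ≥ cφ`, then for every `λ > 0` there is a nonzero `λ`-solution
(equivalently, the `Q`-processes are not unique). -/
theorem non_uniqueness_of_drift {E : Type*} [Countable E] (q : E → E → ℝ)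
    (hq : IsQMatrix q) (c : ℝ) (hc : 0 < c) (φ : E → ℝ)
    (hbdd : ∃ C : ℝ, ∀ i, |φ i| ≤ C) (hpos : ∃ k, 0 < φ k)
    (hdrift : DriftGE q φ c) :
    ∀ lam : ℝ, 0 < lam → ∃ u : E → ℝ, IsLamSolution q lam u ∧ u ≠ 0 := by
  intro lam hlam
  obtain ⟨C, hC⟩ := hbdd
  obtain ⟨k, hk⟩ := hpos
  have hoff := hq.1
  have hrow := hq.2.2
  have hCpos : 0 < C := lt_of_lt_of_le hk (le_trans (le_abs_self _) (hC k))
  set m : E → ℝ := fun j => max (φ j) 0 with hm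
  set v : E → ℝ := fun j => m j / C with hv
  have hv01 : ∀ j, 0 ≤ v j ∧ v j ≤ 1 := by
    intro j
    constructor
    · exact div_nonneg (le_max_right _ _) hCpos.le
    · show m j / C ≤ 1
      rw [div_le_one hCpos]
      exact max_le (le_trans (le_abs_self _) (hC j)) hCpos.le
  set c' : ℝ := min lam c with hc'def
  have hc' : 0 < c' := lt_min hlam hc
  have hc'le : c' ≤ lam := min_le_left _ _
  -- drift inequality for `v` with constant `c'`
  have hdv : DriftGE q v c' := by
    intro i
    have hsv : Summable (fun j => if j = i then 0 else q i j * v j) :=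
      summable_off hoff hrow hv01 i
    refine ⟨hsv, ?_⟩
    have hfm : (fun j => if j = i then (0:ℝ) else q i j * m j)
        = fun j => (if j = i then (0:ℝ) else q i j * v j) * C := by
      funext j
      by_cases h : j = i
      · simp [h]
      · simp only [h, if_false]
        show q i j * m j = q i j * (m j / C) * C
        field_simp
    have hsm : Summable (fun j => if j = i then (0:ℝ) else q i j * m j) := by
      rw [hfm]; exact hsv.mul_right C
    have htm : (∑' j, if j = i then (0:ℝ) else q i j * m j)
        = (∑' j, if j = i then (0:ℝ) else q i j * v j) * C := by
      rw [hfm, tsum_mul_right]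
    have hge : (∑' j, if j = i then (0:ℝ) else q i j * φ j)
        ≤ ∑' j, if j = i then (0:ℝ) else q i j * m j := by
      apply Summable.tsum_le_tsum _ (hdrift i).1 hsm
      intro j
      by_cases h : j = i
      · simp [h]
      · simp only [h, if_false]
        exact mul_le_mul_of_nonneg_left (le_max_left _ _) (hoff i j (Ne.symm h))
    have hkey : c' * m i ≤ (∑' j, if j = i then (0:ℝ) else q i j * m j)
        - (-q i i) * m i := by
      rcases le_or_gt 0 (φ i) with hφi | hφi
      · have hmi : m i = φ i := max_eq_left hφi
        have h1 := (hdrift i).2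
        have h2 : c' * φ i ≤ c * φ i := mul_le_mul_of_nonneg_right (min_le_right _ _) hφi
        rw [hmi]
        linarith
      · have hmi : m i = 0 := max_eq_right hφi.le
        rw [hmi, mul_zero, mul_zero, sub_zero]
        apply tsum_nonneg
        intro j
        by_cases h : j = i
        · simp [h]
        · simp only [h, if_false]
          exact mul_nonneg (hoff i j (Ne.symm h)) (le_max_right _ _)
    have hSv : (∑' j, if j = i then (0:ℝ) else q i j * v j)
        = (∑' j, if j = i then (0:ℝ) else q i j * m j) / C := by
      rw [htm, mul_div_cancel_right₀ _ hCpos.ne']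
    have h2 : (c' * m i) / C
        ≤ ((∑' j, if j = i then (0:ℝ) else q i j * m j) - (-q i i) * m i) / C :=
      (div_le_div_iff_of_pos_right hCpos).2 hkey
    have e0 : v i = m i / C := rfl
    have e1 : c' * (m i / C) = (c' * m i) / C := by ring
    have e2 : (∑' j, if j = i then (0:ℝ) else q i j * m j) / C - (-q i i) * (m i / C)
        = ((∑' j, if j = i then (0:ℝ) else q i j * m j) - (-q i i) * m i) / C := by ring
    rw [e0, hSv, e1, e2]
    exact h2
  obtain ⟨u₁, hu₁sol, hu₁ge⟩ := key_exists q hq c' hc' v hv01 hdv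
  have hdψ : DriftGE q (fun i => u₁ i ^ (lam / c')) lam := drift_pow hq hc' hc'le hu₁sol
  have hψ01 : ∀ j, 0 ≤ u₁ j ^ (lam / c') ∧ u₁ j ^ (lam / c') ≤ 1 := by
    intro j
    exact ⟨Real.rpow_nonneg (hu₁sol.1 j).1 _,
      Real.rpow_le_one (hu₁sol.1 j).1 (hu₁sol.1 j).2 (le_of_lt (div_pos hlam hc'))⟩
  obtain ⟨u, husol, huge⟩ :=
    key_exists q hq lam hlam (fun i => u₁ i ^ (lam / c')) hψ01 hdψ
  refine ⟨u, husol, ?_⟩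
  intro h0
  have hvk : 0 < v k := div_pos (lt_of_lt_of_le hk (le_max_left _ _)) hCpos
  have hu₁k : 0 < u₁ k := lt_of_lt_of_le hvk (hu₁ge k)
  have hψk : 0 < u₁ k ^ (lam / c') := Real.rpow_pos_of_pos hu₁k _
  have huk : 0 < u k := lt_of_lt_of_le hψk (huge k)
  rw [h0] at huk
  simpa using huk
end

section
/- Non-uniqueness criterion, necessity (Theorem 4, via criterion (C3)): Let q be a totally stable, conservative Q-matrix on a countable set E. Suppose that for some λ₀ > 0 there exists a nonzero λ₀-solution (equivalently, the Q-processes are not unique). Then for every constant c > 0 there exists a bounded function φ : E → ℝ with φ(i) ≥ 0 for all i and sup_{k ∈ E} φ(k) > 0 such that ∑_{j ≠ i} q(i,j)·φ(j) − q_i·φ(i) ≥ c·φ(i) for every i ∈ E. -/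
open scoped BigOperators Classical

lemma pow_tangent (m : ℕ) {x y : ℝ} (hx : 0 ≤ x) (hy : 0 ≤ y) :
    y ^ (m + 1) + (m + 1 : ℝ) * y ^ m * (x - y) ≤ x ^ (m + 1) := by
  have key : (∑ i ∈ Finset.range (m + 1), x ^ i * y ^ (m + 1 - 1 - i)) * (x - y)
      = x ^ (m + 1) - y ^ (m + 1) := geom_sum₂_mul x y (m + 1)
  have hterm : ∀ i ∈ Finset.range (m + 1), y ^ m = y ^ i * y ^ (m + 1 - 1 - i) ∨ True := by
    intro i hi; left
    rw [← pow_add]; congr 1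
    have := Finset.mem_range.mp hi; omega
  rcases le_total y x with h | h
  · have hS : (m + 1 : ℝ) * y ^ m ≤ ∑ i ∈ Finset.range (m + 1), x ^ i * y ^ (m + 1 - 1 - i) := by
      calc (m + 1 : ℝ) * y ^ m = ∑ _i ∈ Finset.range (m + 1), y ^ m := by
            simp [Finset.sum_const, mul_comm]
        _ ≤ _ := by
            apply Finset.sum_le_sum
            intro i hi
            have hmi : y ^ m = y ^ i * y ^ (m + 1 - 1 - i) := by
              rw [← pow_add]; congr 1
              have := Finset.mem_range.mp hi; omega
            rw [hmi]
            exact mul_le_mul_of_nonneg_right (pow_le_pow_left₀ hy h i) (pow_nonneg hy _)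
    have := mul_le_mul_of_nonneg_right hS (sub_nonneg.mpr h)
    linarith [key ▸ this]
  · have hS : (∑ i ∈ Finset.range (m + 1), x ^ i * y ^ (m + 1 - 1 - i)) ≤ (m + 1 : ℝ) * y ^ m := by
      calc (∑ i ∈ Finset.range (m + 1), x ^ i * y ^ (m + 1 - 1 - i))
          ≤ ∑ _i ∈ Finset.range (m + 1), y ^ m := by
            apply Finset.sum_le_sum
            intro i hi
            have hmi : y ^ m = y ^ i * y ^ (m + 1 - 1 - i) := by
              rw [← pow_add]; congr 1
              have := Finset.mem_range.mp hi; omega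
            rw [hmi]
            exact mul_le_mul_of_nonneg_right (pow_le_pow_left₀ hx h i) (pow_nonneg hy _)
        _ = (m + 1 : ℝ) * y ^ m := by simp [Finset.sum_const, mul_comm]
    have := mul_le_mul_of_nonpos_right hS (sub_nonpos.mpr h)
    linarith [key ▸ this]


/-- Non-uniqueness criterion, necessity (Theorem 4, via criterion (C3)):
if for some `λ₀ > 0` there is a nonzero `λ₀`-solution (i.e. the `Q`-processes
are not unique), then for every `c > 0` there is a bounded nonnegative
function `φ` with positive supremum satisfying `Qφ ≥ cφ`. -/
theorem drift_of_non_uniqueness {E : Type*} [Countable E] (q : E → E → ℝ)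
    (hq : IsQMatrix q) (lam₀ : ℝ) (hlam₀ : 0 < lam₀)
    (hne : ∃ u : E → ℝ, IsLamSolution q lam₀ u ∧ u ≠ 0) :
    ∀ c : ℝ, 0 < c → ∃ φ : E → ℝ,
      (∃ C : ℝ, ∀ i, |φ i| ≤ C) ∧ (∀ i, 0 ≤ φ i) ∧ (∃ k, 0 < φ k) ∧
      DriftGE q φ c := by
  obtain ⟨u, ⟨hu01, husum⟩, hune⟩ := hne
  obtain ⟨hoff, hdiag, hrow⟩ := hq
  intro c hc
  set m := ⌈c / lam₀⌉₊ with hmdef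
  have hk : c ≤ (m + 1 : ℝ) * lam₀ := by
    have h1 : c / lam₀ ≤ (m : ℝ) := Nat.le_ceil _
    have h2 := (div_le_iff₀ hlam₀).mp h1
    nlinarith
  refine ⟨fun i => u i ^ (m + 1), ⟨1, fun i => ?_⟩,
    fun i => pow_nonneg (hu01 i).1 _, ?_, ?_⟩
  · rw [abs_of_nonneg (pow_nonneg (hu01 i).1 _)]
    exact pow_le_one₀ (hu01 i).1 (hu01 i).2
  · obtain ⟨i₀, hi₀⟩ := Function.ne_iff.mp hune
    exact ⟨i₀, pow_pos (lt_of_le_of_ne (hu01 i₀).1 (Ne.symm hi₀)) _⟩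
  · intro i
    have hf : Summable (fun j => if j = i then 0 else q i j * u j ^ (m + 1)) := by
      apply Summable.of_nonneg_of_le _ _ (husum i).summable
      · intro j
        by_cases h : j = i
        · simp [h]
        · simp only [if_neg h]
          exact mul_nonneg (hoff i j (Ne.symm h)) (pow_nonneg (hu01 j).1 _)
      · intro j
        by_cases h : j = i
        · simp [h]
        · simp only [if_neg h]
          exact mul_le_mul_of_nonneg_left
            (pow_le_of_le_one (hu01 j).1 (hu01 j).2 (Nat.succ_ne_zero m)) (hoff i j (Ne.symm h))
    refine ⟨hf, ?_⟩
    set A : ℝ := u i ^ (m + 1) - (m + 1 : ℝ) * u i ^ m * u i with hA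
    set B : ℝ := (m + 1 : ℝ) * u i ^ m with hB
    have hg' := ((hrow i).mul_left A).add ((husum i).mul_left B)
    have heq : (fun j => A * (if j = i then 0 else q i j)
        + B * (if j = i then 0 else q i j * u j))
        = fun j => if j = i then 0 else
            q i j * (u i ^ (m + 1) + (m + 1 : ℝ) * u i ^ m * (u j - u i)) := by
      funext j
      by_cases h : j = i <;> simp only [if_pos, if_neg, h, if_true, if_false, ite_true, ite_false]
      · simp
      · rw [hA, hB]; ring
    rw [heq] at hg'
    have hval : A * (-q i i) + B * ((lam₀ + -q i i) * u i)
        = (-q i i) * u i ^ (m + 1) + (m + 1 : ℝ) * lam₀ * u i ^ (m + 1) := by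
      rw [hA, hB]; ring
    rw [hval] at hg'
    have hle : (-q i i) * u i ^ (m + 1) + (m + 1 : ℝ) * lam₀ * u i ^ (m + 1)
        ≤ ∑' j, if j = i then 0 else q i j * u j ^ (m + 1) := by
      rw [← hg'.tsum_eq]
      apply Summable.tsum_le_tsum _ hg'.summable hf
      intro j
      by_cases h : j = i
      · simp [h]
      · simp only [if_neg h]
        exact mul_le_mul_of_nonneg_left (pow_tangent m (hu01 j).1 (hu01 i).1) (hoff i j (Ne.symm h))
    have hcu : c * u i ^ (m + 1) ≤ (m + 1 : ℝ) * lam₀ * u i ^ (m + 1) :=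
      mul_le_mul_of_nonneg_right hk (pow_nonneg (hu01 i).1 _)
    linarith
end

section
/- Equivalence over the constant c in the non-uniqueness criterion (Theorem 4): Let q be a totally stable, conservative Q-matrix on a countable set E. If for SOME constant c₀ > 0 there exists a bounded function φ : E → ℝ with sup_{k ∈ E} φ(k) > 0 and ∑_{j ≠ i} q(i,j)·φ(j) − q_i·φ(i) ≥ c₀·φ(i) for every i ∈ E, then for EVERY constant c > 0 there exists a bounded function ψ : E → ℝ with ψ ≥ 0, sup_{k ∈ E} ψ(k) > 0 and ∑_{j ≠ i} q(i,j)·ψ(j) − q_i·ψ(i) ≥ c·ψ(i) for every i ∈ E. -/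
open scoped BigOperators Classical

/-- Equivalence over the constant `c` in the non-uniqueness criterion
(Theorem 4): if for SOME `c₀ > 0` there is a bounded function `φ` with
positive supremum and `Qφ ≥ c₀ φ`, then for EVERY `c > 0` there is a bounded
nonnegative function `ψ` with positive supremum and `Qψ ≥ cψ`. -/
theorem drift_const_equivalence {E : Type*} [Countable E] (q : E → E → ℝ)
    (hq : IsQMatrix q) (c₀ : ℝ) (hc₀ : 0 < c₀) (φ : E → ℝ)
    (hbdd : ∃ C : ℝ, ∀ i, |φ i| ≤ C) (hpos : ∃ k, 0 < φ k)
    (hdrift : DriftGE q φ c₀) :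
    ∀ c : ℝ, 0 < c → ∃ ψ : E → ℝ,
      (∃ C : ℝ, ∀ i, |ψ i| ≤ C) ∧ (∀ i, 0 ≤ ψ i) ∧ (∃ k, 0 < ψ k) ∧
      DriftGE q ψ c := by
  classical
  obtain ⟨C, hC⟩ := hbdd
  obtain ⟨k₀, hk₀⟩ := hpos
  intro c hc
  set M := sSup (Set.range φ) with hMdef
  have hbdd' : BddAbove (Set.range φ) := ⟨C, by rintro _ ⟨i, rfl⟩; exact (abs_le.mp (hC i)).2⟩
  have hle : ∀ i, φ i ≤ M := fun i => le_csSup hbdd' ⟨i, rfl⟩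
  have hM : 0 < M := lt_of_lt_of_le hk₀ (hle k₀)
  set a := max 0 ((c - c₀)/c * M) with hadef
  have ha0 : 0 ≤ a := le_max_left _ _
  have h1lt : (c - c₀)/c < 1 := by rw [div_lt_one hc]; linarith
  have haM : a < M := by
    apply max_lt hM
    have := mul_lt_mul_of_pos_right h1lt hM
    linarith
  have key : ∀ x : ℝ, 0 ≤ x → x ≤ M - a → (c - c₀) * x ≤ c₀ * a := by
    intro x hx hxM
    rcases le_or_gt c c₀ with h | h
    · nlinarith
    · have ha : a = (c - c₀)/c * M := by
        apply max_eq_right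
        exact mul_nonneg (div_nonneg (by linarith) hc.le) hM.le
      have hMa : M - a = c₀/c * M := by rw [ha]; field_simp; ring
      rw [hMa] at hxM
      have h2 := mul_le_mul_of_nonneg_left hxM (by linarith : (0:ℝ) ≤ c - c₀)
      have h3 : (c - c₀) * (c₀/c * M) = c₀ * ((c - c₀)/c * M) := by
        field_simp
      rw [ha]; linarith
  set ψ : E → ℝ := fun i => max (φ i - a) 0 with hψdef
  have hψ0 : ∀ i, 0 ≤ ψ i := fun i => le_max_right _ _
  have hψM : ∀ i, ψ i ≤ M - a := fun i => max_le (by linarith [hle i]) (by linarith)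
  have hψge : ∀ j, φ j - a ≤ ψ j := fun j => le_max_left _ _
  refine ⟨ψ, ⟨M, fun i => abs_le.mpr ⟨by linarith [hψ0 i], by linarith [hψM i]⟩⟩,
    hψ0, ?_, ?_⟩
  · obtain ⟨_, ⟨k, rfl⟩, hk⟩ := exists_lt_of_lt_csSup ⟨φ k₀, Set.mem_range_self k₀⟩ haM
    exact ⟨k, lt_of_lt_of_le (by linarith) (hψge k)⟩
  · intro i
    have hrow := hq.2.2 i
    have hqnn : ∀ j, 0 ≤ (if j = i then 0 else q i j) := by
      intro j
      by_cases hji : j = i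
      · simp [hji]
      · simpa [hji] using hq.1 i j (Ne.symm hji)
    -- summability of the ψ-series
    have hψsum : Summable (fun j => if j = i then 0 else q i j * ψ j) := by
      apply Summable.of_nonneg_of_le
        (f := fun j => (if j = i then 0 else q i j) * (M - a))
      · intro j
        by_cases hji : j = i
        · simp [hji]
        · simp only [if_neg hji]
          exact mul_nonneg (by simpa [hji] using hqnn j) (hψ0 j)
      · intro j
        by_cases hji : j = i
        · simp [hji]
        · simp only [if_neg hji]
          exact mul_le_mul_of_nonneg_left (hψM j) (by simpa [hji] using hqnn j)
      · exact hrow.summable.mul_right (M - a)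
    refine ⟨hψsum, ?_⟩
    have hψnn' : ∀ j, 0 ≤ (if j = i then 0 else q i j * ψ j) := by
      intro j
      by_cases hji : j = i
      · simp [hji]
      · simp only [if_neg hji]
        exact mul_nonneg (by simpa [hji] using hqnn j) (hψ0 j)
    by_cases hia : φ i ≤ a
    · -- ψ i = 0
      have hψi : ψ i = 0 := by simp [hψdef]; linarith
      rw [hψi]
      have : (0:ℝ) ≤ ∑' j, if j = i then 0 else q i j * ψ j := tsum_nonneg hψnn'
      simp only [mul_zero]
      linarith
    · push_neg at hia
      have hψi : ψ i = φ i - a := max_eq_left (by linarith)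
      -- the φ - a series
      have hsa : HasSum (fun j => if j = i then 0 else q i j * a) (-q i i * a) := by
        have := hrow.mul_right a
        have heq : (fun j => if j = i then 0 else q i j * a) = fun j => (if j = i then 0 else q i j) * a := by
          funext j
          by_cases hji : j = i <;> simp [hji]
        rw [heq]; exact this
      obtain ⟨hφsum, hφdr⟩ := hdrift i
      have hsub : HasSum
          (fun j => (if j = i then 0 else q i j * φ j) - (if j = i then 0 else q i j * a))
          ((∑' j, if j = i then 0 else q i j * φ j) - (-q i i * a)) :=
        hφsum.hasSum.sub hsa
      have h1 : (∑' j, if j = i then 0 else q i j * φ j) - (-q i i * a)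
          ≤ ∑' j, if j = i then 0 else q i j * ψ j := by
        rw [← hsub.tsum_eq]
        apply Summable.tsum_le_tsum _ hsub.summable hψsum
        intro j
        by_cases hji : j = i
        · simp [hji]
        · simp only [if_neg hji]
          have : q i j * (φ j - a) ≤ q i j * ψ j :=
            mul_le_mul_of_nonneg_left (hψge j) (by simpa [hji] using hqnn j)
          linarith [this]
      have hkey := key (ψ i) (hψ0 i) (hψM i)
      rw [hψi] at hkey ⊢
      have hqi : 0 ≤ -q i i := neg_nonneg.mpr (hq.2.1 i)
      nlinarith [hφdr, h1]
end

section
/- Independence of λ in criterion (C3): Let q be a totally stable, conservative Q-matrix on a countable set E. If for some λ₀ > 0 there exists a nonzero λ₀-solution, then for every λ > 0 there exists a nonzero λ-solution. Equivalently, the equation (λI − Q)u = 0 with 0 ≤ u ≤ 1 has only the zero solution for some λ > 0 if and only if it has only the zero solution for all λ > 0. -/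
open scoped BigOperators Classical

open Filter Topology

/-- The one-step operator `T_λ v (i) = (∑_{j ≠ i} q i j * v j) / (λ + q_i)`. -/
private noncomputable def Topr {E : Type*} (q : E → E → ℝ) (lam : ℝ) (v : E → ℝ) (i : E) : ℝ :=
  (∑' j, if j = i then 0 else q i j * v j) / (lam + -q i i)

private lemma exists_nonzero_sol {E : Type*} (q : E → E → ℝ) (hq : IsQMatrix q)
    {lam₀ lam : ℝ} (h₀ : 0 < lam₀) (hl : 0 < lam) {u : E → ℝ}
    (hu : IsLamSolution q lam₀ u) (hne : u ≠ 0) :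
    ∃ v : E → ℝ, IsLamSolution q lam v ∧ v ≠ 0 := by
  obtain ⟨hoff, hdiag, hrow⟩ := hq
  obtain ⟨hu01, husum⟩ := hu
  have hqi : ∀ i, 0 ≤ -q i i := fun i => neg_nonneg.2 (hdiag i)
  have hpos : ∀ i, 0 < lam + -q i i := fun i => add_pos_of_pos_of_nonneg hl (hqi i)
  have hpos₀ : ∀ i, 0 < lam₀ + -q i i := fun i => add_pos_of_pos_of_nonneg h₀ (hqi i)
  have hrowS : ∀ i, Summable (fun j => if j = i then 0 else q i j) := fun i => (hrow i).summable
  have hoff' : ∀ i j, ¬ j = i → 0 ≤ q i j := fun i j hji => hoff i j (fun h => hji h.symm)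
  have hterm : ∀ i j, 0 ≤ if j = i then 0 else q i j := by
    intro i j
    by_cases hji : j = i
    · simp [hji]
    · simpa [hji] using hoff' i j hji
  -- summability of `j ↦ q i j * v j` for `0 ≤ v ≤ 1`
  have hsumm : ∀ (v : E → ℝ), (∀ j, 0 ≤ v j ∧ v j ≤ 1) → ∀ i,
      Summable (fun j => if j = i then 0 else q i j * v j) := by
    intro v hv i
    refine Summable.of_nonneg_of_le (fun j => ?_) (fun j => ?_) (hrowS i)
    · by_cases hji : j = i
      · simp [hji]
      · simpa [hji] using mul_nonneg (hoff' i j hji) (hv j).1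
    · by_cases hji : j = i
      · simp [hji]
      · simp only [if_neg hji]
        calc q i j * v j ≤ q i j * 1 := mul_le_mul_of_nonneg_left (hv j).2 (hoff' i j hji)
          _ = q i j := mul_one _
  have htsum_nonneg : ∀ (v : E → ℝ), (∀ j, 0 ≤ v j) → ∀ i,
      0 ≤ ∑' j, if j = i then 0 else q i j * v j := by
    intro v hv i
    refine tsum_nonneg fun j => ?_
    by_cases hji : j = i
    · simp [hji]
    · simpa [hji] using mul_nonneg (hoff' i j hji) (hv j)
  have htsum_le : ∀ (v : E → ℝ), (∀ j, 0 ≤ v j ∧ v j ≤ 1) → ∀ i,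
      (∑' j, if j = i then 0 else q i j * v j) ≤ -q i i := by
    intro v hv i
    rw [← (hrow i).tsum_eq]
    refine Summable.tsum_le_tsum (fun j => ?_) (hsumm v hv i) (hrowS i)
    by_cases hji : j = i
    · simp [hji]
    · simp only [if_neg hji]
      calc q i j * v j ≤ q i j * 1 := mul_le_mul_of_nonneg_left (hv j).2 (hoff' i j hji)
        _ = q i j := mul_one _
  -- the operator maps `[0,1]`-valued functions to `[0,1]`-valued functions
  have hT01 : ∀ (v : E → ℝ), (∀ j, 0 ≤ v j ∧ v j ≤ 1) → ∀ i,
      0 ≤ Topr q lam v i ∧ Topr q lam v i ≤ 1 := by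
    intro v hv i
    simp only [Topr]
    constructor
    · exact div_nonneg (htsum_nonneg v (fun j => (hv j).1) i) (hpos i).le
    · rw [div_le_one (hpos i)]
      calc (∑' j, if j = i then 0 else q i j * v j) ≤ -q i i := htsum_le v hv i
        _ ≤ lam + -q i i := by linarith
  -- the operator is monotone
  have hTmono : ∀ (v v' : E → ℝ), (∀ j, 0 ≤ v j ∧ v j ≤ 1) → (∀ j, 0 ≤ v' j ∧ v' j ≤ 1) →
      (∀ j, v j ≤ v' j) → ∀ i, Topr q lam v i ≤ Topr q lam v' i := by
    intro v v' hv hv' hle i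
    simp only [Topr]
    gcongr ?_ / _
    · exact (hpos i).le
    · refine Summable.tsum_le_tsum (fun j => ?_) (hsumm v hv i) (hsumm v' hv' i)
      by_cases hji : j = i
      · simp [hji]
      · simp only [if_neg hji]
        exact mul_le_mul_of_nonneg_left (hle j) (hoff' i j hji)
  -- the exponent and the starting subsolution
  set c : ℝ := max 1 (lam / lam₀) with hc
  have hc1 : 1 ≤ c := le_max_left _ _
  have hc0 : 0 < c := lt_of_lt_of_le one_pos hc1
  set w₀ : E → ℝ := fun i => u i ^ c with hw₀def
  have hw₀01 : ∀ i, 0 ≤ w₀ i ∧ w₀ i ≤ 1 := fun i =>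
    ⟨Real.rpow_nonneg (hu01 i).1 c, Real.rpow_le_one (hu01 i).1 (hu01 i).2 hc0.le⟩
  -- the key inequality: `w₀ ≤ T w₀`
  have hkey : ∀ i, w₀ i ≤ Topr q lam w₀ i := by
    intro i
    simp only [Topr]
    rcases le_or_gt lam lam₀ with hle | hlt
    -- easy case `lam ≤ lam₀`: here `c = 1` and `w₀ = u`
    · have hceq : c = 1 := max_eq_left ((div_le_one h₀).2 hle)
      have hwu : ∀ j, w₀ j = u j := fun j => by
        rw [hw₀def]; simp [hceq]
      have h1 : (∑' j, if j = i then 0 else q i j * w₀ j)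
          = (lam₀ + -q i i) * u i := by
        rw [← (husum i).tsum_eq]
        exact tsum_congr fun j => by by_cases hji : j = i <;> simp [hji, hwu j]
      rw [le_div_iff₀ (hpos i), h1, hwu i]
      nlinarith [(hu01 i).1]
    -- hard case `lam₀ < lam`: Hölder + AM-GM
    · have hcval : c = lam / lam₀ := max_eq_right (le_of_lt ((one_lt_div h₀).2 hlt))
      have hc1' : 1 < c := by rw [hcval]; exact (one_lt_div h₀).2 hlt
      have hcne : c ≠ 0 := hc0.ne'
      have hcm1 : (0:ℝ) < c - 1 := by linarith
      set M : ℝ := ∑' j, if j = i then 0 else q i j * w₀ j with hM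
      have hM0 : 0 ≤ M := htsum_nonneg w₀ (fun j => (hw₀01 j).1) i
      -- Hölder with exponents `c/(c-1)` and `c`
      have hpq : (c/(c-1)).HolderConjugate c := (Real.HolderConjugate.conjExponent hc1').symm
      set f : E → ℝ := fun j => (if j = i then 0 else q i j) ^ ((c-1)/c) with hf
      set g : E → ℝ := fun j => (if j = i then 0 else q i j * u j ^ c) ^ (1/c) with hg
      have hf0 : ∀ j, 0 ≤ f j := fun j => Real.rpow_nonneg (hterm i j) _
      have hterm2 : ∀ j, 0 ≤ if j = i then 0 else q i j * u j ^ c := by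
        intro j
        by_cases hji : j = i
        · simp [hji]
        · simpa [hji] using mul_nonneg (hoff' i j hji) (Real.rpow_nonneg (hu01 j).1 c)
      have hg0 : ∀ j, 0 ≤ g j := fun j => Real.rpow_nonneg (hterm2 j) _
      have hfp : ∀ j, f j ^ (c/(c-1)) = (if j = i then 0 else q i j) := by
        intro j
        rw [hf, ← Real.rpow_mul (hterm i j)]
        rw [show (c-1)/c * (c/(c-1)) = 1 by field_simp, Real.rpow_one]
      have hgc : ∀ j, g j ^ c = (if j = i then 0 else q i j * u j ^ c) := by
        intro j
        rw [hg, ← Real.rpow_mul (hterm2 j)]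
        rw [show 1/c * c = 1 by field_simp, Real.rpow_one]
      have hfsum : Summable (fun j => f j ^ (c/(c-1))) := by
        refine (summable_congr (fun j => hfp j)).2 (hrowS i)
      have hgsum : Summable (fun j => g j ^ c) := by
        refine (summable_congr (fun j => hgc j)).2 ?_
        exact hsumm w₀ hw₀01 i
      have hfg : ∀ j, f j * g j = (if j = i then 0 else q i j * u j) := by
        intro j
        by_cases hji : j = i
        · simp [hf, hg, hji, Real.zero_rpow (by positivity : (c-1)/c ≠ 0),
            Real.zero_rpow (by positivity : 1/c ≠ 0)]
        · simp only [hf, hg, if_neg hji]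
          rw [Real.mul_rpow (hoff' i j hji) (Real.rpow_nonneg (hu01 j).1 c),
            ← Real.rpow_mul (hu01 j).1, mul_one_div_cancel hcne, Real.rpow_one,
            ← mul_assoc, ← Real.rpow_add' (hoff' i j hji) (by rw [show (c-1)/c + 1/c = 1 by field_simp; ring]; norm_num),
            show (c-1)/c + 1/c = 1 by field_simp; ring, Real.rpow_one]
      have holder := Real.inner_le_Lp_mul_Lq_tsum_of_nonneg hpq hf0 hg0 hfsum hgsum
      rw [tsum_congr hfg, tsum_congr hfp, tsum_congr hgc, (husum i).tsum_eq,
        (hrow i).tsum_eq, one_div_div] at holder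
      have hMeq : (∑' j, if j = i then 0 else q i j * u j ^ c) = M := by
        rw [hM]
      rw [hMeq] at holder
      -- now `holder : (lam₀ + -q i i) * u i ≤ (-q i i) ^ ((c-1)/c) * M ^ (1/c)`
      -- AM-GM: `(-q i i)^((c-1)/c) * (lam + -q i i)^(1/c) ≤ lam₀ + -q i i`
      have hlamc : lam / c = lam₀ := by rw [hcval]; field_simp
      have hamgm : (-q i i) ^ ((c-1)/c) * (lam + -q i i) ^ (1/c) ≤ lam₀ + -q i i := by
        have h := Real.geom_mean_le_arith_mean2_weighted
          (by positivity : (0:ℝ) ≤ (c-1)/c) (by positivity : (0:ℝ) ≤ 1/c)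
          (hqi i) (hpos i).le (by field_simp; ring)
        have heq : (c-1)/c * (-q i i) + 1/c * (lam + -q i i) = -q i i + lam / c := by
          field_simp; ring
        calc (-q i i) ^ ((c-1)/c) * (lam + -q i i) ^ (1/c)
            ≤ (c-1)/c * (-q i i) + 1/c * (lam + -q i i) := h
          _ = -q i i + lam / c := heq
          _ = lam₀ + -q i i := by rw [hlamc]; ring
      -- combine
      have hlp : 0 < (lam + -q i i) ^ (1/c) := Real.rpow_pos_of_pos (hpos i) _
      have hdivb : (-q i i) ^ ((c-1)/c) ≤ (lam₀ + -q i i) / (lam + -q i i) ^ (1/c) :=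
        (le_div_iff₀ hlp).2 hamgm
      have h1 : (lam₀ + -q i i) * u i
          ≤ (lam₀ + -q i i) * (M ^ (1/c) / (lam + -q i i) ^ (1/c)) := by
        calc (lam₀ + -q i i) * u i ≤ (-q i i) ^ ((c-1)/c) * M ^ (1/c) := holder
          _ ≤ ((lam₀ + -q i i) / (lam + -q i i) ^ (1/c)) * M ^ (1/c) :=
              mul_le_mul_of_nonneg_right hdivb (Real.rpow_nonneg hM0 _)
          _ = (lam₀ + -q i i) * (M ^ (1/c) / (lam + -q i i) ^ (1/c)) := by ring
      have h2 : u i ≤ (M / (lam + -q i i)) ^ (1/c) := by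
        rw [Real.div_rpow hM0 (hpos i).le]
        exact le_of_mul_le_mul_left h1 (hpos₀ i)
      have h3 := Real.rpow_le_rpow (hu01 i).1 h2 hc0.le
      rwa [← Real.rpow_mul (div_nonneg hM0 (hpos i).le), one_div_mul_cancel hcne,
        Real.rpow_one] at h3
  -- monotone iteration
  set w : ℕ → E → ℝ := fun n => (Topr q lam)^[n] w₀ with hwdef
  have hw0 : w 0 = w₀ := rfl
  have hwsucc : ∀ n, w (n+1) = Topr q lam (w n) := fun n =>
    Function.iterate_succ_apply' _ _ _
  have hw01 : ∀ n i, 0 ≤ w n i ∧ w n i ≤ 1 := by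
    intro n
    induction n with
    | zero => exact hw₀01
    | succ n ih => rw [hwsucc]; exact hT01 (w n) ih
  have hwmono : ∀ n i, w n i ≤ w (n+1) i := by
    intro n
    induction n with
    | zero => rw [hwsucc, hw0]; exact hkey
    | succ n ih =>
      rw [hwsucc n, hwsucc (n+1)]
      exact hTmono (w n) (w (n+1)) (hw01 n) (hw01 (n+1)) ih
  have hmon : ∀ i, Monotone fun n => w n i := fun i =>
    monotone_nat_of_le_succ fun n => hwmono n i
  set S : E → ℝ := fun i => ⨆ n, w n i with hSdef
  have hbdd : ∀ i, BddAbove (Set.range fun n => w n i) := fun i =>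
    ⟨1, by rintro _ ⟨n, rfl⟩; exact (hw01 n i).2⟩
  have htendS : ∀ i, Tendsto (fun n => w n i) atTop (𝓝 (S i)) := fun i =>
    tendsto_atTop_ciSup (hmon i) (hbdd i)
  have hS01 : ∀ i, 0 ≤ S i ∧ S i ≤ 1 := fun i =>
    ⟨le_trans (hw01 0 i).1 (le_ciSup (hbdd i) 0), ciSup_le fun n => (hw01 n i).2⟩
  have hSw₀ : ∀ i, w₀ i ≤ S i := fun i => le_ciSup (hbdd i) 0
  -- dominated convergence for the row sums
  have hlim : ∀ i, Tendsto (fun n => ∑' j, if j = i then 0 else q i j * w n j) atTop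
      (𝓝 (∑' j, if j = i then 0 else q i j * S j)) := by
    intro i
    refine tendsto_tsum_of_dominated_convergence (hrowS i) (fun j => ?_)
      (Eventually.of_forall fun n j => ?_)
    · by_cases hji : j = i
      · simp [hji]
      · simp only [if_neg hji]
        exact (htendS j).const_mul (q i j)
    · by_cases hji : j = i
      · simp [hji]
      · simp only [if_neg hji, Real.norm_eq_abs]
        rw [abs_of_nonneg (mul_nonneg (hoff' i j hji) (hw01 n j).1)]
        calc q i j * w n j ≤ q i j * 1 :=
            mul_le_mul_of_nonneg_left (hw01 n j).2 (hoff' i j hji)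
          _ = q i j := mul_one _
  -- `S` is a fixed point
  have hfix : ∀ i, (∑' j, if j = i then 0 else q i j * S j) = (lam + -q i i) * S i := by
    intro i
    have h1 : Tendsto (fun n => w (n+1) i) atTop (𝓝 (S i)) :=
      (htendS i).comp (tendsto_add_atTop_nat 1)
    have h2 : Tendsto (fun n => w (n+1) i) atTop
        (𝓝 ((∑' j, if j = i then 0 else q i j * S j) / (lam + -q i i))) := by
      have : ∀ n, w (n+1) i
          = (∑' j, if j = i then 0 else q i j * w n j) / (lam + -q i i) := by
        intro n; rw [hwsucc n]; rfl
      simp only [this]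
      exact (hlim i).div_const _
    have heq := tendsto_nhds_unique h1 h2
    exact (((eq_div_iff (hpos i).ne').1 heq).symm).trans (mul_comm _ _)
  -- conclusion
  refine ⟨S, ⟨hS01, fun i => ?_⟩, ?_⟩
  · rw [(hsumm S hS01 i).hasSum_iff]
    exact hfix i
  · obtain ⟨i, hi⟩ : ∃ i, u i ≠ 0 := by
      by_contra h
      push_neg at h
      exact hne (funext fun i => h i)
    have hui : 0 < u i := lt_of_le_of_ne (hu01 i).1 (Ne.symm hi)
    have hSi : 0 < S i := lt_of_lt_of_le (Real.rpow_pos_of_pos hui c) (hSw₀ i)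
    intro hS0
    rw [hS0] at hSi
    exact lt_irrefl 0 hSi

/-- Independence of `λ` in criterion (C3): if for some `λ₀ > 0` there is a
nonzero `λ₀`-solution, then for every `λ > 0` there is a nonzero `λ`-solution.
Equivalently, `(λ I - Q) u = 0`, `0 ≤ u ≤ 1` has only the zero solution for
some `λ > 0` iff it does for all `λ > 0`. -/
theorem lambda_independence {E : Type*} [Countable E] (q : E → E → ℝ)
    (hq : IsQMatrix q) :
    (∀ lam₀ : ℝ, 0 < lam₀ → (∃ u : E → ℝ, IsLamSolution q lam₀ u ∧ u ≠ 0) →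
      ∀ lam : ℝ, 0 < lam → ∃ u : E → ℝ, IsLamSolution q lam u ∧ u ≠ 0) ∧
    ((∃ lam : ℝ, 0 < lam ∧ ∀ u : E → ℝ, IsLamSolution q lam u → u = 0) ↔
      (∀ lam : ℝ, 0 < lam → ∀ u : E → ℝ, IsLamSolution q lam u → u = 0)) := by
  have main : ∀ lam₀ : ℝ, 0 < lam₀ → (∃ u : E → ℝ, IsLamSolution q lam₀ u ∧ u ≠ 0) →
      ∀ lam : ℝ, 0 < lam → ∃ u : E → ℝ, IsLamSolution q lam u ∧ u ≠ 0 := by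
    rintro lam₀ h₀ ⟨u, hu, hne⟩ lam hl
    exact exists_nonzero_sol q hq h₀ hl hu hne
  refine ⟨main, ?_, fun h => ⟨1, one_pos, h 1 one_pos⟩⟩
  rintro ⟨lam, hl, huniq⟩ lam' hl' u hu
  by_contra hne
  obtain ⟨v, hv, hvne⟩ := main lam' hl' ⟨u, hu, hne⟩ lam hl
  exact hvne (huniq v hv)
end

section
/- Lemma 6 (first assertion): Let q be a totally stable, conservative Q-matrix on a countable set E, let λ > 0, and let p : E → ℝ be a probability measure on E with p(j) > 0 for every j and ∑_{j ∈ E} p(j) = 1. On the enlarged state space E_δ = E ∪ {δ} (δ a fictitious extra state) define the transition matrix Π^δ(λ) by: Π^δ_{ij}(λ) = q(i,j)/(λ + q_i) for i, j ∈ E with i ≠ j, Π^δ_{ii}(λ) = 0 for i ∈ E, Π^δ_{iδ}(λ) = λ/(λ + q_i) for i ∈ E, Π^δ_{δj}(λ) = p(j) for j ∈ E, and Π^δ_{δδ}(λ) = 0. Then the equation (λI − Q)u = 0, 0 ≤ u ≤ 1 on E has only the zero solution if and only if the equation v(i) = ∑_{j ∈ E} Π^δ_{ij}(λ)·v(j)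 for all i ∈ E_δ (the sum on the right extending only over j ∈ E), with 0 ≤ v ≤ 1 on E_δ, has only the zero solution. -/
open scoped BigOperators Classical

/-- The enlarged transition matrix `Π^δ(λ)` on `E_δ = E ∪ {δ}` (realized as
`Option E`, with `δ = none`):
`Π^δ_{ij}(λ) = q(i,j)/(λ + q_i)` for `i ≠ j` in `E`, `Π^δ_{ii}(λ) = 0`,
`Π^δ_{iδ}(λ) = λ/(λ + q_i)`, `Π^δ_{δj}(λ) = p(j)`, `Π^δ_{δδ}(λ) = 0`. -/
noncomputable def PiDelta {E : Type*} (q : E → E → ℝ) (lam : ℝ) (p : E → ℝ) :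
    Option E → Option E → ℝ
  | some i, some j => if j = i then 0 else q i j / (lam + -q i i)
  | some i, none => lam / (lam + -q i i)
  | none, some j => p j
  | none, none => 0

/-- Lemma 6 (first assertion): for `λ > 0` and a positive probability measure
`p` on `E`, the equation `(λ I - Q) u = 0`, `0 ≤ u ≤ 1` on `E` has only the
zero solution iff the equation `v(i) = ∑_{j ∈ E} Π^δ_{ij}(λ) v(j)` on
`E_δ`, `0 ≤ v ≤ 1`, has only the zero solution. -/
theorem enlarged_chain_equation {E : Type*} [Countable E] (q : E → E → ℝ)
    (hq : IsQMatrix q) (lam : ℝ) (hlam : 0 < lam)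
    (p : E → ℝ) (hp : ∀ j, 0 < p j) (hp1 : HasSum p 1) :
    (∀ u : E → ℝ, IsLamSolution q lam u → u = 0) ↔
      (∀ v : Option E → ℝ,
        (∀ i, 0 ≤ v i ∧ v i ≤ 1) →
        (∀ i : Option E,
          HasSum (fun j : E => PiDelta q lam p i (some j) * v (some j)) (v i)) →
        v = 0) := by
  obtain ⟨hoff, hdiag, hrow⟩ := hq
  have hc : ∀ i, (0:ℝ) < lam + -q i i := fun i => by have := hdiag i; linarith
  constructor
  · intro hU v hv hveq
    have hu0 : (fun i => v (some i)) = 0 := by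
      apply hU
      refine ⟨fun i => hv (some i), fun i => ?_⟩
      have h := (hveq (some i)).mul_left (lam + -q i i)
      have hkey : (fun j : E => (lam + -q i i) *
          (PiDelta q lam p (some i) (some j) * v (some j))) =
          fun j : E => if j = i then 0 else q i j * v (some j) := by
        funext j
        simp only [PiDelta]
        split_ifs with hj
        · ring
        · have hne := (hc i).ne'
          field_simp
      rw [hkey] at h
      simpa [mul_comm] using h
    funext x
    match x with
    | some i => exact congrFun hu0 i
    | none =>
      have h : HasSum (fun j : E => p j * v (some j)) (v none) := by
        simpa [PiDelta] using hveq none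
      have hz : (fun j : E => p j * v (some j)) = fun _ => 0 := by
        funext j
        simp [show v (some j) = 0 from congrFun hu0 j]
      rw [hz] at h
      simpa using h.unique hasSum_zero
  · intro hV u hu
    obtain ⟨hub, hueq⟩ := hu
    have hsumm : Summable (fun j => p j * u j) :=
      Summable.of_nonneg_of_le (fun j => mul_nonneg (hp j).le (hub j).1)
        (fun j => by nlinarith [(hp j).le, (hub j).2, (hub j).1]) hp1.summable
    set s : ℝ := ∑' j, p j * u j with hs
    set v : Option E → ℝ := fun x => x.elim s u with hvdef
    have hv0 : v = 0 := by
      apply hV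
      · intro i
        match i with
        | some i => exact hub i
        | none =>
          refine ⟨tsum_nonneg fun j => mul_nonneg (hp j).le (hub j).1, ?_⟩
          calc s ≤ ∑' j, p j := Summable.tsum_le_tsum
                  (fun j => by nlinarith [(hp j).le, (hub j).2, (hub j).1])
                  hsumm hp1.summable
            _ = 1 := hp1.tsum_eq
      · intro i
        match i with
        | some i =>
          have h := (hueq i).div_const (lam + -q i i)
          have hkey : (fun j : E => (if j = i then 0 else q i j * u j) /
              (lam + -q i i)) =
              fun j : E => PiDelta q lam p (some i) (some j) * v (some j) := by
            funext j
            simp only [PiDelta]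
            split_ifs with hj
            · simp
            · show q i j * u j / (lam + -q i i) = q i j / (lam + -q i i) * u j
              ring
          rw [hkey, mul_comm, mul_div_assoc,
            div_self (hc i).ne', mul_one] at h
          exact h
        | none =>
          simpa [PiDelta, v, s] using hsumm.hasSum
    funext i
    exact congrFun hv0 (some i)
end
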